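/- arXiv:2105.07684 — 3 statements merged into one kernel-verified Lean document; each statement's English description precedes it below -/
import Mathlib

section
/- Let p ≥ 2 and Δ ∈ (0, Δ_max). Assume b(t,·) and σ(t,·) are Lipschitz with constants [b]_Lip and [σ]_Lip (operator norm for σ) and that σ is bounded: ‖σ‖_∞ := sup_{t,x}‖σ(t,x)‖ < ∞. Let ε and ε' be ℝ^q-valued random vectors in L^p with E[ε] = E[ε'] = 0. Then for all x, x' ∈ ℝ^d and every k: E| E_k(x,ε) − E_k(x',ε') |^p ≤ |x−x'|^p e^{C̄Δ} + Δ C̃ · E|ε−ε'|^p, and consequently ‖E_k(x,ε) − E_k(x',ε')‖_p ≤ e^{C̄Δ/p} |x−x'| + (Δ C̃)^{1/p} ‖ε−ε'‖_p, where C̄ = p[b]_Lip + c_p^{(1)} + 2^{p−1} c^{(2)}_{p,Δ_max} [σ]_Lip^p E|ε|^p and C̃ = 2^{p−1} c^{(2)}_{p,Δ_max} ‖σ‖_∞^p. -/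
open MeasureTheory Real

noncomputable section

open Set NNReal RealInnerProductSpace

set_option maxHeartbeats 1000000

abbrev Euc (d : ℕ) : Type := EuclideanSpace ℝ (Fin d)

def c₁ (r : ℝ) : ℝ := 2 ^ (max (r - 3) 0) * ((r - 1) * (r - 2) / 2)

def c₂ (r h₀ : ℝ) : ℝ := 2 ^ (max (r - 3) 0) * (r - 1) * (1 + r / 2 * h₀ ^ (r / 2 - 1))

/-- The Euler operator `E_k(x,ε) = x + Δ b(t_k,x) + √Δ σ(t_k,x) ε`. -/
def euler {d q : ℕ} (Δ : ℝ) (b : ℝ → Euc d → Euc d) (σ : ℝ → Euc d → (Euc q →L[ℝ] Euc d))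
    (tk : ℝ) (x : Euc d) (e : Euc q) : Euc d :=
  x + Δ • b tk x + Real.sqrt Δ • (σ tk x) e

/-- `(A+B)^q ≤ 2^(max (q-1) 0) (A^q + B^q)` for `A,B ≥ 0`, `q ≥ 0`. -/
lemma rpow_add_le_two_rpow {A B q : ℝ} (hA : 0 ≤ A) (hB : 0 ≤ B) (hq : 0 ≤ q) :
    (A + B) ^ q ≤ 2 ^ (max (q - 1) 0) * (A ^ q + B ^ q) := by
  rcases le_or_gt q 1 with hq1 | hq1
  · rw [max_eq_right (by linarith), Real.rpow_zero, one_mul]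
    rcases eq_or_lt_of_le hq with hq0 | hq0
    · rw [← hq0]
      simp only [Real.rpow_zero]
      norm_num
    · have h := NNReal.rpow_add_le_add_rpow A.toNNReal B.toNNReal hq hq1
      have hc : ∀ x : ℝ, 0 ≤ x → ((x.toNNReal : ℝ≥0) : ℝ) = x := fun x hx => Real.coe_toNNReal _ hx
      calc (A + B) ^ q = ((A.toNNReal + B.toNNReal : ℝ≥0) : ℝ) ^ q := by
            push_cast [hc A hA, hc B hB]; ring_nf
        _ = (((A.toNNReal + B.toNNReal) ^ q : ℝ≥0) : ℝ) := by
            rw [NNReal.coe_rpow]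
        _ ≤ ((A.toNNReal ^ q + B.toNNReal ^ q : ℝ≥0) : ℝ) := by exact_mod_cast h
        _ = A ^ q + B ^ q := by
            push_cast [NNReal.coe_rpow, hc A hA, hc B hB]; ring
  · rw [max_eq_left (by linarith)]
    have hconv := (convexOn_rpow (le_of_lt hq1)).2 (mem_Ici.2 hA) (mem_Ici.2 hB)
      (by norm_num : (0:ℝ) ≤ 1/2) (by norm_num : (0:ℝ) ≤ 1/2) (by norm_num)
    simp only [smul_eq_mul] at hconv
    have h1 : (1/2 * A + 1/2 * B) ^ q = (A + B) ^ q / 2 ^ q := by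
      rw [show 1/2 * A + 1/2 * B = (A + B) / 2 by ring, Real.div_rpow (by linarith) (by norm_num)]
    rw [h1, div_le_iff₀ (Real.rpow_pos_of_pos (by norm_num) q)] at hconv
    have h3 : (2:ℝ) ^ (q - 1) = 2 ^ q / 2 := by
      rw [Real.rpow_sub (by norm_num), Real.rpow_one]
    rw [h3]
    nlinarith [hconv]

/-- Young-type inequality: `p A^(p-2) B^2 ≤ (p-2)/4 A^p + 2^(p-1) B^p`. -/
lemma young_aux {A B p : ℝ} (hA : 0 ≤ A) (hB : 0 ≤ B) (hp : 2 ≤ p) :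
    p * A ^ (p - 2) * B ^ 2 ≤ (p - 2) / 4 * A ^ p + 2 ^ (p - 1) * B ^ p := by
  rcases eq_or_lt_of_le hp with hp2 | hp2
  · rw [← hp2]
    have e0 : (2:ℝ) - 2 = 0 := by norm_num
    have e1 : (2:ℝ) - 1 = 1 := by norm_num
    rw [e0, e1, Real.rpow_zero, Real.rpow_one, Real.rpow_two]
    norm_num
  · have hppos : (0:ℝ) < p := by linarith
    have hpne : p ≠ 0 := ne_of_gt hppos
    by_cases hB0 : B = 0
    · subst hB0
      rw [Real.zero_rpow hpne]
      have h1 : (0:ℝ) ≤ (p - 2) / 4 * A ^ p :=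
        mul_nonneg (by linarith) (Real.rpow_nonneg hA p)
      nlinarith
    by_cases hA0 : A = 0
    · subst hA0
      rw [Real.zero_rpow (by intro h; apply hB0; linarith : p - 2 ≠ 0), Real.zero_rpow hpne]
      have h1 : (0:ℝ) ≤ 2 ^ (p-1) * B ^ p := by positivity
      nlinarith
    have hApos : 0 < A := lt_of_le_of_ne hA (Ne.symm hA0)
    have hBpos : 0 < B := lt_of_le_of_ne hB (Ne.symm hB0)
    have key := Real.geom_mean_le_arith_mean2_weighted
      (w₁ := (p-2)/p) (w₂ := 2/p) (p₁ := p/4 * A ^ p) (p₂ := p * 2 ^ (p-2) * B ^ p)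
      (div_nonneg (by linarith) hppos.le) (div_nonneg (by norm_num) hppos.le)
      (mul_nonneg (by positivity) (Real.rpow_nonneg hA p))
      (mul_nonneg (by positivity) (Real.rpow_nonneg hB p))
      (by field_simp; ring)
    have e1 : (p/4 * A ^ p) ^ ((p-2)/p) = (p/4) ^ ((p-2)/p) * A ^ (p - 2) := by
      rw [Real.mul_rpow (by positivity) (by positivity), ← Real.rpow_mul hA]
      congr 1
      field_simp
    have e2 : (p * 2 ^ (p-2) * B ^ p) ^ (2/p) = (p * 2 ^ (p-2)) ^ (2/p) * B ^ 2 := by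
      rw [Real.mul_rpow (by positivity) (by positivity), ← Real.rpow_mul hB]
      congr 1
      rw [show p * (2/p) = (2:ℝ) by field_simp, Real.rpow_two]
    have e3 : (p/4) ^ ((p-2)/p) * (p * 2 ^ (p-2)) ^ (2/p) = p := by
      rw [show p/4 = p * (2:ℝ) ^ (-2 : ℝ) by
            rw [Real.rpow_neg (by norm_num)]; norm_num [Real.rpow_two]; ring]
      rw [Real.mul_rpow (by positivity) (by positivity),
          Real.mul_rpow (by positivity) (by positivity),
          ← Real.rpow_mul (by norm_num : (0:ℝ) ≤ 2), ← Real.rpow_mul (by norm_num : (0:ℝ) ≤ 2)]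
      have f1 : p ^ ((p-2)/p) * p ^ (2/p) = p := by
        rw [← Real.rpow_add hppos, show (p-2)/p + 2/p = 1 by field_simp; ring, Real.rpow_one]
      have f2 : (2:ℝ) ^ (-2 * ((p-2)/p)) * 2 ^ ((p-2) * (2/p)) = 1 := by
        rw [← Real.rpow_add (by norm_num : (0:ℝ) < 2),
            show -2 * ((p-2)/p) + (p-2) * (2/p) = 0 by ring, Real.rpow_zero]
      calc p ^ ((p-2)/p) * 2 ^ (-2 * ((p-2)/p)) * (p ^ (2/p) * 2 ^ ((p-2) * (2/p)))
          = (p ^ ((p-2)/p) * p ^ (2/p)) * ((2:ℝ) ^ (-2 * ((p-2)/p)) * 2 ^ ((p-2) * (2/p))) := by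
            ring
        _ = p := by rw [f1, f2, mul_one]
    have lhs_eq : (p/4 * A ^ p) ^ ((p-2)/p) * (p * 2 ^ (p-2) * B ^ p) ^ (2/p)
        = p * A ^ (p-2) * B ^ 2 := by
      rw [e1, e2,
        show (p/4) ^ ((p-2)/p) * A ^ (p-2) * ((p * 2 ^ (p-2)) ^ (2/p) * B ^ 2)
          = ((p/4) ^ ((p-2)/p) * (p * 2 ^ (p-2)) ^ (2/p)) * (A ^ (p-2) * B ^ 2) by ring,
        e3]
      ring
    have rhs_eq : (p-2)/p * (p/4 * A ^ p) + 2/p * (p * 2 ^ (p-2) * B ^ p)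
        = (p-2)/4 * A ^ p + 2 ^ (p-1) * B ^ p := by
      rw [show p - 1 = p - 2 + 1 by ring, Real.rpow_add_one (by norm_num : (2:ℝ) ≠ 0)]
      field_simp
    rw [← lhs_eq, ← rhs_eq]
    exact key

/-- If `f` has nonneg second derivative on the interior, and `f a ≥ 0`, `f' a ≥ 0` at the
left-most point `a` of a convex set `D`, then `f ≥ 0` on `D`. -/
lemma nonneg_aux {D : Set ℝ} (hD : Convex ℝ D) {a : ℝ} (haD : a ∈ D)
    (hleast : ∀ x ∈ D, a ≤ x) (f f' f'' : ℝ → ℝ)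
    (h1 : ∀ x ∈ D, HasDerivAt f (f' x) x)
    (h2c : ContinuousOn f' D)
    (h2 : ∀ x ∈ interior D, HasDerivAt f' (f'' x) x)
    (h3 : ∀ x ∈ interior D, 0 ≤ f'' x)
    (h4 : 0 ≤ f a) (h5 : 0 ≤ f' a) : ∀ x ∈ D, 0 ≤ f x := by
  have hf'mono : MonotoneOn f' D :=
    monotoneOn_of_deriv_nonneg hD h2c
      (fun x hx => (h2 x hx).differentiableAt.differentiableWithinAt)
      (fun x hx => by rw [(h2 x hx).deriv]; exact h3 x hx)
  have hf'0 : ∀ x ∈ D, 0 ≤ f' x := fun x hx =>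
    h5.trans (hf'mono haD hx (hleast x hx))
  have hfmono : MonotoneOn f D :=
    monotoneOn_of_deriv_nonneg hD
      (fun x hx => (h1 x hx).continuousAt.continuousWithinAt)
      (fun x hx => (h1 x (interior_subset hx)).differentiableAt.differentiableWithinAt)
      (fun x hx => by
        rw [(h1 x (interior_subset hx)).deriv]
        exact hf'0 x (interior_subset hx))
  exact fun x hx => h4.trans (hfmono haD hx (hleast x hx))

def CC (p : ℝ) : ℝ := 2 ^ (max (p - 3) 0) * (p * (p - 1) / 2)

lemma one_le_a {p : ℝ} : (1:ℝ) ≤ 2 ^ (max (p - 3) 0) :=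
  Real.one_le_rpow one_le_two (le_max_right _ _)

lemma a_pos {p : ℝ} : (0:ℝ) < 2 ^ (max (p - 3) 0) := lt_of_lt_of_le one_pos one_le_a

lemma a_le_CC {p : ℝ} (hp : 2 ≤ p) : 2 ^ (max (p - 3) 0) ≤ CC p := by
  unfold CC
  nlinarith [mul_le_mul_of_nonneg_left (show (1:ℝ) ≤ p * (p - 1) / 2 by nlinarith)
    (le_of_lt (@a_pos p))]

lemma one_le_CC {p : ℝ} (hp : 2 ≤ p) : 1 ≤ CC p :=
  le_trans one_le_a (a_le_CC hp)

lemma CC_nonneg {p : ℝ} (hp : 2 ≤ p) : 0 ≤ CC p := le_trans zero_le_one (one_le_CC hp)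

lemma two_CC {p : ℝ} : 2 * CC p = 2 ^ (max (p - 3) 0) * (p * (p - 1)) := by
  unfold CC; ring

lemma rpow_add_le_two_rpow' {A B p : ℝ} (hA : 0 ≤ A) (hB : 0 ≤ B) (hp : 2 ≤ p) :
    (A + B) ^ (p - 2) ≤ 2 ^ (max (p - 3) 0) * (A ^ (p - 2) + B ^ (p - 2)) := by
  have h := rpow_add_le_two_rpow hA hB (by linarith : (0:ℝ) ≤ p - 2)
  rwa [show p - 2 - 1 = p - 3 by ring] at h

/-- `(s+t)^p ≤ s^p + p s^(p-1) t + CC p (s^(p-2) t² + t^p)`. -/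
lemma S_plus {p s t : ℝ} (hp : 2 ≤ p) (hs : 0 ≤ s) (ht : 0 ≤ t) :
    (s + t) ^ p ≤ s ^ p + p * s ^ (p-1) * t + CC p * (s ^ (p-2) * t ^ 2) + CC p * t ^ p := by
  rcases eq_or_lt_of_le hp with hp2 | hp2
  · subst hp2
    have hC : CC 2 = 1 := by
      unfold CC
      rw [show max (2 - 3 : ℝ) 0 = 0 by norm_num, Real.rpow_zero]
      norm_num
    rw [hC, show (2:ℝ) - 1 = 1 by norm_num, show (2:ℝ) - 2 = 0 by norm_num,
        Real.rpow_zero, Real.rpow_one, Real.rpow_two, Real.rpow_two, Real.rpow_two]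
    nlinarith [sq_nonneg t]
  have hppos : (0:ℝ) < p := by linarith
  rcases eq_or_lt_of_le hs with hs0 | hs0
  · subst hs0
    rw [Real.zero_rpow (ne_of_gt hppos), Real.zero_rpow (by linarith : p - 1 ≠ 0)]
    have h1 : (0:ℝ) ≤ CC p * ((0:ℝ) ^ (p-2) * t ^ 2) :=
      mul_nonneg (CC_nonneg hp) (mul_nonneg (Real.rpow_nonneg le_rfl _) (sq_nonneg t))
    have h2 : t ^ p ≤ CC p * t ^ p := by
      nlinarith [one_le_CC hp, Real.rpow_nonneg ht p]
    simpa using by nlinarith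
  set C := CC p with hCdef
  set f : ℝ → ℝ := fun u => s ^ p + p * s ^ (p-1) * u + C * (s ^ (p-2) * u ^ 2) + C * u ^ p
      - (s + u) ^ p with hf
  set f' : ℝ → ℝ := fun u => p * s ^ (p-1) + C * (s ^ (p-2) * (2 * u)) + C * (p * u ^ (p-1))
      - p * (s + u) ^ (p-1) with hf'
  set f'' : ℝ → ℝ := fun u => C * (s ^ (p-2) * 2) + C * (p * ((p-1) * u ^ (p-2)))
      - p * ((p-1) * (s + u) ^ (p-2)) with hf''
  have key : ∀ u ∈ Ici (0:ℝ), 0 ≤ f u := by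
    apply nonneg_aux (convex_Ici 0) (self_mem_Ici) (fun x hx => hx) f f' f''
    · intro u _
      have h1 : HasDerivAt (fun u : ℝ => p * s ^ (p-1) * u) (p * s ^ (p-1)) u := by
        simpa using (hasDerivAt_id u).const_mul (p * s ^ (p-1))
      have h2 : HasDerivAt (fun u : ℝ => C * (s ^ (p-2) * u ^ 2))
          (C * (s ^ (p-2) * (2 * u))) u := by
        have := ((hasDerivAt_pow 2 u).const_mul (s ^ (p-2))).const_mul C
        refine this.congr_deriv ?_
        push_cast
        ring
      have h3 : HasDerivAt (fun u : ℝ => C * u ^ p) (C * (p * u ^ (p-1))) u :=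
        (Real.hasDerivAt_rpow_const (Or.inr (by linarith : 1 ≤ p))).const_mul C
      have h4 : HasDerivAt (fun u : ℝ => (s + u) ^ p) (p * (s + u) ^ (p-1)) u := by
        have hin : HasDerivAt (fun u : ℝ => s + u) 1 u := (hasDerivAt_id u).const_add s
        have := (Real.hasDerivAt_rpow_const (x := s + u)
          (Or.inr (by linarith : 1 ≤ p))).comp u hin
        simp at this; exact this
      have hsum := (((h1.const_add (s ^ p)).add h2).add h3).sub h4
      refine hsum.congr_deriv ?_
      try ring
    · intro u _
      have c1 : ContinuousAt (fun v : ℝ => v ^ (p-1)) u :=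
        continuousAt_id.rpow_const (Or.inr (by linarith))
      have c2 : ContinuousAt (fun v : ℝ => (s + v) ^ (p-1)) u :=
        (continuousAt_const.add continuousAt_id).rpow_const (Or.inr (by linarith))
      exact ContinuousAt.continuousWithinAt
        (((continuousAt_const.add
            (continuousAt_const.mul (continuousAt_const.mul
              (continuousAt_const.mul continuousAt_id)))).add
          (continuousAt_const.mul (continuousAt_const.mul c1))).sub
            (continuousAt_const.mul c2))
    · intro u hu
      rw [interior_Ici] at hu
      have hu0 : (0:ℝ) < u := hu
      have h1 : HasDerivAt (fun u : ℝ => C * (s ^ (p-2) * (2 * u)))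
          (C * (s ^ (p-2) * 2)) u := by
        have := (((hasDerivAt_id u).const_mul (2:ℝ)).const_mul (s ^ (p-2))).const_mul C
        refine this.congr_deriv ?_
        ring
      have h2 : HasDerivAt (fun u : ℝ => C * (p * u ^ (p-1)))
          (C * (p * ((p-1) * u ^ (p-2)))) u := by
        have := ((Real.hasDerivAt_rpow_const (x := u) (p := p-1)
          (Or.inl (ne_of_gt hu0))).const_mul p).const_mul C
        refine this.congr_deriv ?_
        rw [show p - 1 - 1 = p - 2 by ring]
      have h3 : HasDerivAt (fun u : ℝ => p * (s + u) ^ (p-1))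
          (p * ((p-1) * (s + u) ^ (p-2))) u := by
        have hin : HasDerivAt (fun u : ℝ => s + u) 1 u := (hasDerivAt_id u).const_add s
        have := ((Real.hasDerivAt_rpow_const (x := s + u) (p := p-1)
          (Or.inl (by positivity : s + u ≠ 0))).comp u hin).const_mul p
        refine this.congr_deriv ?_
        rw [show p - 1 - 1 = p - 2 by ring]
        try ring
      have hsum := ((h1.const_add (p * s ^ (p-1))).add h2).sub h3
      refine hsum.congr_deriv ?_
      try ring
    · intro u hu
      rw [interior_Ici] at hu
      have hu0 : (0:ℝ) < u := hu
      have hb := rpow_add_le_two_rpow' hs (le_of_lt hu0) hp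
      have hS : (0:ℝ) ≤ s ^ (p-2) := Real.rpow_nonneg hs _
      have hU : (0:ℝ) ≤ u ^ (p-2) := Real.rpow_nonneg (le_of_lt hu0) _
      have hpp : (0:ℝ) < p * (p-1) := by nlinarith
      have h2C := @two_CC p
      have hC0 := CC_nonneg hp
      have k2 : p * (p-1) * ((s+u) ^ (p-2))
          ≤ p * (p-1) * (2 ^ (max (p - 3) 0) * (s ^ (p-2) + u ^ (p-2))) :=
        mul_le_mul_of_nonneg_left hb hpp.le
      have k3 : p * (p-1) * ((2:ℝ) ^ (max (p - 3) 0) * (s ^ (p-2) + u ^ (p-2)))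
          = 2 * CC p * (s ^ (p-2) + u ^ (p-2)) := by
        linear_combination -(s ^ (p-2) + u ^ (p-2)) * h2C
      have k4 : (0:ℝ) ≤ CC p * (u ^ (p-2)) * (p * (p-1) - 2) :=
        mul_nonneg (mul_nonneg hC0 hU) (by nlinarith)
      simp only [hf'']
      nlinarith [k2, k3, k4]
    · simp only [hf]
      norm_num [Real.zero_rpow (ne_of_gt hppos)]
    · simp only [hf']
      norm_num [Real.zero_rpow (by linarith : p - 1 ≠ 0)]
  have := key t (mem_Ici.2 ht)
  simp only [hf] at this
  linarith

lemma two_CC_ge {p : ℝ} (hp : 2 ≤ p) : p * (p - 1) ≤ 2 * CC p := by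
  rw [two_CC]
  nlinarith [mul_le_mul_of_nonneg_right (@one_le_a p) (show (0:ℝ) ≤ p * (p-1) by nlinarith)]

/-- `|s-t|^p ≤ s^p - p s^(p-1) t + CC p (s^(p-2) t² + t^p)`. -/
lemma S_minus {p s t : ℝ} (hp : 2 ≤ p) (hs : 0 ≤ s) (ht : 0 ≤ t) :
    |s - t| ^ p ≤ s ^ p - p * s ^ (p-1) * t + CC p * (s ^ (p-2) * t ^ 2) + CC p * t ^ p := by
  rcases eq_or_lt_of_le hp with hp2 | hp2
  · subst hp2
    have hC : CC 2 = 1 := by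
      unfold CC
      rw [show max (2 - 3 : ℝ) 0 = 0 by norm_num, Real.rpow_zero]
      norm_num
    rw [hC, show (2:ℝ) - 1 = 1 by norm_num, show (2:ℝ) - 2 = 0 by norm_num,
        Real.rpow_zero, Real.rpow_one, Real.rpow_two, Real.rpow_two, Real.rpow_two, sq_abs]
    nlinarith [sq_nonneg t]
  have hppos : (0:ℝ) < p := by linarith
  rcases eq_or_lt_of_le hs with hs0 | hs0
  · subst hs0
    rw [Real.zero_rpow (ne_of_gt hppos), Real.zero_rpow (by linarith : p - 1 ≠ 0),
        show |0 - t| = t by rw [zero_sub, abs_neg, abs_of_nonneg ht]]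
    have h1 : (0:ℝ) ≤ CC p * ((0:ℝ) ^ (p-2) * t ^ 2) :=
      mul_nonneg (CC_nonneg hp) (mul_nonneg (Real.rpow_nonneg le_rfl _) (sq_nonneg t))
    have h2 : t ^ p ≤ CC p * t ^ p := by
      nlinarith [one_le_CC hp, Real.rpow_nonneg ht p]
    nlinarith
  set C := CC p with hCdef
  rcases le_total t s with hts | hst
  · -- t ∈ [0, s]
    set f : ℝ → ℝ := fun u => s ^ p - p * s ^ (p-1) * u + C * (s ^ (p-2) * u ^ 2) + C * u ^ p
        - (s - u) ^ p with hf
    set f' : ℝ → ℝ := fun u => -(p * s ^ (p-1)) + C * (s ^ (p-2) * (2 * u)) + C * (p * u ^ (p-1))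
        + p * (s - u) ^ (p-1) with hf'
    set f'' : ℝ → ℝ := fun u => C * (s ^ (p-2) * 2) + C * (p * ((p-1) * u ^ (p-2)))
        - p * ((p-1) * (s - u) ^ (p-2)) with hf''
    have key : ∀ u ∈ Icc (0:ℝ) s, 0 ≤ f u := by
      apply nonneg_aux (convex_Icc 0 s) (left_mem_Icc.2 hs) (fun x hx => hx.1) f f' f''
      · intro u _
        have h1 : HasDerivAt (fun u : ℝ => p * s ^ (p-1) * u) (p * s ^ (p-1)) u := by
          simpa using (hasDerivAt_id u).const_mul (p * s ^ (p-1))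
        have h2 : HasDerivAt (fun u : ℝ => C * (s ^ (p-2) * u ^ 2))
            (C * (s ^ (p-2) * (2 * u))) u := by
          have := ((hasDerivAt_pow 2 u).const_mul (s ^ (p-2))).const_mul C
          refine this.congr_deriv ?_
          push_cast
          ring
        have h3 : HasDerivAt (fun u : ℝ => C * u ^ p) (C * (p * u ^ (p-1))) u :=
          (Real.hasDerivAt_rpow_const (Or.inr (by linarith : 1 ≤ p))).const_mul C
        have h4 : HasDerivAt (fun u : ℝ => (s - u) ^ p) (-(p * (s - u) ^ (p-1))) u := by
          have hin : HasDerivAt (fun u : ℝ => s - u) (-1) u := by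
            simpa using (hasDerivAt_id u).const_sub s
          have := (Real.hasDerivAt_rpow_const (x := s - u)
            (Or.inr (by linarith : 1 ≤ p))).comp u hin
          refine this.congr_deriv ?_
          ring
        have hsum := ((((hasDerivAt_const u (s ^ p)).sub h1).add h2).add h3).sub h4
        refine hsum.congr_deriv ?_
        ring
      · intro u _
        have c1 : ContinuousAt (fun v : ℝ => v ^ (p-1)) u :=
          continuousAt_id.rpow_const (Or.inr (by linarith))
        have c2 : ContinuousAt (fun v : ℝ => (s - v) ^ (p-1)) u :=
          (continuousAt_const.sub continuousAt_id).rpow_const (Or.inr (by linarith))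
        exact ContinuousAt.continuousWithinAt
          ((((continuousAt_const.neg).add
              (continuousAt_const.mul (continuousAt_const.mul
                (continuousAt_const.mul continuousAt_id)))).add
            (continuousAt_const.mul (continuousAt_const.mul c1))).add
              (continuousAt_const.mul c2))
      · intro u hu
        rw [interior_Icc] at hu
        have hu0 : (0:ℝ) < u := hu.1
        have hus : u < s := hu.2
        have h1 : HasDerivAt (fun u : ℝ => C * (s ^ (p-2) * (2 * u)))
            (C * (s ^ (p-2) * 2)) u := by
          have := (((hasDerivAt_id u).const_mul (2:ℝ)).const_mul (s ^ (p-2))).const_mul C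
          refine this.congr_deriv ?_
          ring
        have h2 : HasDerivAt (fun u : ℝ => C * (p * u ^ (p-1)))
            (C * (p * ((p-1) * u ^ (p-2)))) u := by
          have := ((Real.hasDerivAt_rpow_const (x := u) (p := p-1)
            (Or.inl (ne_of_gt hu0))).const_mul p).const_mul C
          refine this.congr_deriv ?_
          rw [show p - 1 - 1 = p - 2 by ring]
        have h3 : HasDerivAt (fun u : ℝ => p * (s - u) ^ (p-1))
            (-(p * ((p-1) * (s - u) ^ (p-2)))) u := by
          have hin : HasDerivAt (fun u : ℝ => s - u) (-1) u := by
            simpa using (hasDerivAt_id u).const_sub s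
          have := ((Real.hasDerivAt_rpow_const (x := s - u) (p := p-1)
            (Or.inl (by intro h; nlinarith : s - u ≠ 0))).comp u hin).const_mul p
          refine this.congr_deriv ?_
          rw [show p - 1 - 1 = p - 2 by ring]
          try ring
        have hsum := ((h1.const_add (-(p * s ^ (p-1)))).add h2).add h3
        refine hsum.congr_deriv ?_
        try ring
      · intro u hu
        rw [interior_Icc] at hu
        have hu0 : (0:ℝ) < u := hu.1
        have hus : u < s := hu.2
        have hS : (0:ℝ) ≤ s ^ (p-2) := Real.rpow_nonneg hs _
        have hU : (0:ℝ) ≤ u ^ (p-2) := Real.rpow_nonneg (le_of_lt hu0) _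
        have hpp : (0:ℝ) < p * (p-1) := by nlinarith
        have hb : (s - u) ^ (p-2) ≤ s ^ (p-2) :=
          Real.rpow_le_rpow (by linarith) (by linarith) (by linarith)
        have k2 : p * (p-1) * ((s - u) ^ (p-2)) ≤ p * (p-1) * (s ^ (p-2)) :=
          mul_le_mul_of_nonneg_left hb hpp.le
        have k3 : p * (p-1) * (s ^ (p-2)) ≤ 2 * C * (s ^ (p-2)) :=
          mul_le_mul_of_nonneg_right (two_CC_ge hp) hS
        have k4 : (0:ℝ) ≤ C * (p * ((p-1) * u ^ (p-2))) :=
          mul_nonneg (CC_nonneg hp) (mul_nonneg hppos.le (mul_nonneg (by linarith) hU))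
        simp only [hf'']
        nlinarith [k2, k3, k4]
      · simp only [hf]
        norm_num [Real.zero_rpow (ne_of_gt hppos)]
      · simp only [hf']
        norm_num [Real.zero_rpow (by linarith : p - 1 ≠ 0)]
    have := key t ⟨ht, hts⟩
    simp only [hf] at this
    rw [abs_of_nonneg (by linarith : (0:ℝ) ≤ s - t)]
    linarith
  · -- t ∈ [s, ∞)
    set g : ℝ → ℝ := fun u => s ^ p - p * s ^ (p-1) * u + C * (s ^ (p-2) * u ^ 2) + C * u ^ p
        - (u - s) ^ p with hg
    set g' : ℝ → ℝ := fun u => -(p * s ^ (p-1)) + C * (s ^ (p-2) * (2 * u)) + C * (p * u ^ (p-1))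
        - p * (u - s) ^ (p-1) with hg'
    set g'' : ℝ → ℝ := fun u => C * (s ^ (p-2) * 2) + C * (p * ((p-1) * u ^ (p-2)))
        - p * ((p-1) * (u - s) ^ (p-2)) with hg''
    have key : ∀ u ∈ Ici s, 0 ≤ g u := by
      apply nonneg_aux (convex_Ici s) (self_mem_Ici) (fun x hx => hx) g g' g''
      · intro u _
        have h1 : HasDerivAt (fun u : ℝ => p * s ^ (p-1) * u) (p * s ^ (p-1)) u := by
          simpa using (hasDerivAt_id u).const_mul (p * s ^ (p-1))
        have h2 : HasDerivAt (fun u : ℝ => C * (s ^ (p-2) * u ^ 2))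
            (C * (s ^ (p-2) * (2 * u))) u := by
          have := ((hasDerivAt_pow 2 u).const_mul (s ^ (p-2))).const_mul C
          refine this.congr_deriv ?_
          push_cast
          ring
        have h3 : HasDerivAt (fun u : ℝ => C * u ^ p) (C * (p * u ^ (p-1))) u :=
          (Real.hasDerivAt_rpow_const (Or.inr (by linarith : 1 ≤ p))).const_mul C
        have h4 : HasDerivAt (fun u : ℝ => (u - s) ^ p) (p * (u - s) ^ (p-1)) u := by
          have hin : HasDerivAt (fun u : ℝ => u - s) 1 u := (hasDerivAt_id u).sub_const s
          have := (Real.hasDerivAt_rpow_const (x := u - s)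
            (Or.inr (by linarith : 1 ≤ p))).comp u hin
          simp at this; exact this
        have hsum := ((((hasDerivAt_const u (s ^ p)).sub h1).add h2).add h3).sub h4
        refine hsum.congr_deriv ?_
        ring
      · intro u _
        have c1 : ContinuousAt (fun v : ℝ => v ^ (p-1)) u :=
          continuousAt_id.rpow_const (Or.inr (by linarith))
        have c2 : ContinuousAt (fun v : ℝ => (v - s) ^ (p-1)) u :=
          (continuousAt_id.sub continuousAt_const).rpow_const (Or.inr (by linarith))
        exact ContinuousAt.continuousWithinAt
          ((((continuousAt_const.neg).add
              (continuousAt_const.mul (continuousAt_const.mul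
                (continuousAt_const.mul continuousAt_id)))).add
            (continuousAt_const.mul (continuousAt_const.mul c1))).sub
              (continuousAt_const.mul c2))
      · intro u hu
        rw [interior_Ici] at hu
        have hus : s < u := hu
        have hu0 : (0:ℝ) < u := lt_of_le_of_lt hs hus
        have h1 : HasDerivAt (fun u : ℝ => C * (s ^ (p-2) * (2 * u)))
            (C * (s ^ (p-2) * 2)) u := by
          have := (((hasDerivAt_id u).const_mul (2:ℝ)).const_mul (s ^ (p-2))).const_mul C
          refine this.congr_deriv ?_
          ring
        have h2 : HasDerivAt (fun u : ℝ => C * (p * u ^ (p-1)))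
            (C * (p * ((p-1) * u ^ (p-2)))) u := by
          have := ((Real.hasDerivAt_rpow_const (x := u) (p := p-1)
            (Or.inl (ne_of_gt hu0))).const_mul p).const_mul C
          refine this.congr_deriv ?_
          rw [show p - 1 - 1 = p - 2 by ring]
        have h3 : HasDerivAt (fun u : ℝ => p * (u - s) ^ (p-1))
            (p * ((p-1) * (u - s) ^ (p-2))) u := by
          have hin : HasDerivAt (fun u : ℝ => u - s) 1 u := (hasDerivAt_id u).sub_const s
          have := ((Real.hasDerivAt_rpow_const (x := u - s) (p := p-1)
            (Or.inl (by intro h; nlinarith : u - s ≠ 0))).comp u hin).const_mul p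
          refine this.congr_deriv ?_
          rw [show p - 1 - 1 = p - 2 by ring]
          try ring
        have hsum := ((h1.const_add (-(p * s ^ (p-1)))).add h2).sub h3
        refine hsum.congr_deriv ?_
        try ring
      · intro u hu
        rw [interior_Ici] at hu
        have hus : s < u := hu
        have hu0 : (0:ℝ) < u := lt_of_le_of_lt hs hus
        have hS : (0:ℝ) ≤ s ^ (p-2) := Real.rpow_nonneg hs _
        have hU : (0:ℝ) ≤ u ^ (p-2) := Real.rpow_nonneg (le_of_lt hu0) _
        have hpp : (0:ℝ) < p * (p-1) := by nlinarith
        have hb : (u - s) ^ (p-2) ≤ u ^ (p-2) :=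
          Real.rpow_le_rpow (by nlinarith : (0:ℝ) ≤ u - s) (by linarith) (by linarith)
        have k2 : p * (p-1) * ((u - s) ^ (p-2)) ≤ p * (p-1) * (u ^ (p-2)) :=
          mul_le_mul_of_nonneg_left hb hpp.le
        have k3 : (0:ℝ) ≤ (C - 1) * (p * (p-1)) * (u ^ (p-2)) :=
          mul_nonneg (mul_nonneg (by nlinarith [one_le_CC hp]) hpp.le) hU
        have k4 : (0:ℝ) ≤ C * (s ^ (p-2) * 2) :=
          mul_nonneg (CC_nonneg hp) (by positivity)
        simp only [hg'']
        nlinarith [k2, k3, k4]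
      · -- g s ≥ 0
        simp only [hg]
        rw [sub_self, Real.zero_rpow (ne_of_gt hppos)]
        have e1 : s ^ (p-1) * s = s ^ p := by
          rw [← Real.rpow_add_one (ne_of_gt hs0) (p-1), show p - 1 + 1 = p by ring]
        have e2 : s ^ (p-2) * s ^ 2 = s ^ p := by
          rw [← Real.rpow_two, ← Real.rpow_add hs0, show p - 2 + 2 = p by ring]
        have hsp : (0:ℝ) ≤ s ^ p := Real.rpow_nonneg hs _
        have h2C := two_CC_ge hp
        have heq : s ^ p - p * s ^ (p-1) * s + C * (s ^ (p-2) * s ^ 2) + C * s ^ p - 0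
            = (1 - p + 2*C) * s ^ p := by
          linear_combination (-p) * e1 + C * e2
        rw [heq]
        exact mul_nonneg (by nlinarith [h2C]) hsp
      · -- g' s ≥ 0
        simp only [hg']
        rw [sub_self, Real.zero_rpow (by linarith : p - 1 ≠ 0)]
        have e1 : s ^ (p-2) * s = s ^ (p-1) := by
          rw [← Real.rpow_add_one (ne_of_gt hs0) (p-2), show p - 2 + 1 = p - 1 by ring]
        have hsp : (0:ℝ) ≤ s ^ (p-1) := Real.rpow_nonneg hs _
        have e1' : C * (s ^ (p-2) * (2 * s)) = 2 * C * s ^ (p-1) := by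
          linear_combination 2 * C * e1
        have key2 : (0:ℝ) ≤ (2*C + C*p - p) * s ^ (p-1) :=
          mul_nonneg (by nlinarith [one_le_CC hp]) hsp
        nlinarith [e1', key2]
    have := key t hst
    simp only [hg] at this
    rw [show |s - t| = t - s by rw [abs_sub_comm]; exact abs_of_nonneg (by linarith)]
    linarith

/-- The key vector inequality. -/
lemma L1 {E : Type*} [NormedAddCommGroup E] [InnerProductSpace ℝ E] {p : ℝ} (hp : 2 ≤ p)
    (u v : E) :
    ‖u + v‖ ^ p ≤ ‖u‖ ^ p + p * ‖u‖ ^ (p-2) * ⟪u, v⟫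
      + CC p * (‖u‖ ^ (p-2) * ‖v‖ ^ 2) + CC p * ‖v‖ ^ p := by
  have hppos : (0:ℝ) < p := by linarith
  by_cases hv : v = 0
  · subst hv
    simp [Real.zero_rpow (ne_of_gt hppos), mul_nonneg]
  by_cases hu : u = 0
  · subst hu
    have h1 : (0:ℝ) ≤ CC p * ((0:ℝ) ^ (p-2) * ‖v‖ ^ 2) :=
      mul_nonneg (CC_nonneg hp) (mul_nonneg (Real.rpow_nonneg le_rfl _) (sq_nonneg _))
    have h2 : ‖v‖ ^ p ≤ CC p * ‖v‖ ^ p := by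
      nlinarith [one_le_CC hp, Real.rpow_nonneg (norm_nonneg v) p]
    simp only [zero_add, inner_zero_left, norm_zero, mul_zero,
      Real.zero_rpow (ne_of_gt hppos)]
    nlinarith
  set s := ‖u‖ with hsdef
  set t := ‖v‖ with htdef
  set β : ℝ := ⟪u, v⟫ with hβdef
  have hs : 0 < s := norm_pos_iff.2 hu
  have ht : 0 < t := norm_pos_iff.2 hv
  have hβ : |β| ≤ s * t := abs_real_inner_le_norm u v
  have hβl := (abs_le.1 hβ).1
  have hβr := (abs_le.1 hβ).2
  set lam : ℝ := (s * t + β) / (2 * (s * t)) with hlamdef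
  have hst : (0:ℝ) < s * t := by positivity
  have hlam0 : 0 ≤ lam := div_nonneg (by linarith) (by linarith)
  have hlam1 : lam ≤ 1 := by
    rw [hlamdef, div_le_one (by linarith)]
    linarith
  have h0 : ‖u + v‖ ^ p = ((‖u + v‖ ^ 2 : ℝ)) ^ (p/2) := by
    rw [← Real.rpow_natCast ‖u + v‖ 2, ← Real.rpow_mul (norm_nonneg _)]
    congr 1
    push_cast
    ring
  have hcomb : (‖u + v‖ ^ 2 : ℝ) = lam * (s + t)^2 + (1 - lam) * (s - t)^2 := by
    rw [norm_add_sq_real u v]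
    rw [hlamdef]
    field_simp
    ring
  have hX : (0:ℝ) ≤ (s + t)^2 := sq_nonneg _
  have hY : (0:ℝ) ≤ (s - t)^2 := sq_nonneg _
  have hconv := (convexOn_rpow (by linarith : 1 ≤ p/2)).2 (mem_Ici.2 hX) (mem_Ici.2 hY)
    hlam0 (by linarith : 0 ≤ 1 - lam) (by ring)
  simp only [smul_eq_mul] at hconv
  have hXp : (((s + t)^2 : ℝ)) ^ (p/2) = (s + t) ^ p := by
    rw [← Real.rpow_natCast (s + t) 2, ← Real.rpow_mul (by positivity)]
    congr 1
    push_cast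
    ring
  have hYp : (((s - t)^2 : ℝ)) ^ (p/2) = |s - t| ^ p := by
    rw [← sq_abs, ← Real.rpow_natCast |s - t| 2, ← Real.rpow_mul (abs_nonneg _)]
    congr 1
    push_cast
    ring
  have hSp := S_plus hp hs.le ht.le
  have hSm := S_minus hp hs.le ht.le
  have step1 : ‖u + v‖ ^ p ≤ lam * (s + t) ^ p + (1 - lam) * |s - t| ^ p := by
    rw [h0, hcomb]
    rw [hXp, hYp] at hconv
    exact hconv
  have step2 : lam * (s + t) ^ p + (1 - lam) * |s - t| ^ p
      ≤ lam * (s ^ p + p * s ^ (p-1) * t + CC p * (s ^ (p-2) * t ^ 2) + CC p * t ^ p)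
        + (1 - lam) * (s ^ p - p * s ^ (p-1) * t + CC p * (s ^ (p-2) * t ^ 2) + CC p * t ^ p) :=
    add_le_add (mul_le_mul_of_nonneg_left hSp hlam0)
      (mul_le_mul_of_nonneg_left hSm (by linarith))
  have hβeq : (2 * lam - 1) * (s * t) = β := by
    rw [hlamdef]
    field_simp
    ring
  have hs_pow : s ^ (p-1) = s ^ (p-2) * s := by
    rw [← Real.rpow_add_one (ne_of_gt hs) (p-2), show p - 2 + 1 = p - 1 by ring]
  have step3 : lam * (s ^ p + p * s ^ (p-1) * t + CC p * (s ^ (p-2) * t ^ 2) + CC p * t ^ p)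
        + (1 - lam) * (s ^ p - p * s ^ (p-1) * t + CC p * (s ^ (p-2) * t ^ 2) + CC p * t ^ p)
      = s ^ p + p * s ^ (p-2) * β + CC p * (s ^ (p-2) * t ^ 2) + CC p * t ^ p := by
    rw [hs_pow]
    linear_combination (p * s ^ (p-2)) * hβeq
  linarith [step1, step2, step3.le, step3.ge]

lemma c₁_nonneg {p : ℝ} (hp : 2 ≤ p) : 0 ≤ c₁ p := by
  unfold c₁
  have := @a_pos p
  have h1 : (0:ℝ) ≤ (p - 1) * (p - 2) / 2 := by nlinarith
  nlinarith

lemma c₂_nonneg {p Δmax : ℝ} (hp : 2 ≤ p) (hΔ : 0 ≤ Δmax) : 0 ≤ c₂ p Δmax := by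
  unfold c₂
  have := @a_pos p
  have h1 : (0:ℝ) ≤ Δmax ^ (p/2 - 1) := Real.rpow_nonneg hΔ _
  have h2 : (0:ℝ) ≤ 1 + p / 2 * Δmax ^ (p/2 - 1) := by nlinarith
  exact mul_nonneg (mul_nonneg this.le (by linarith)) h2

/-- Combination step: from the Taylor bound and Young's inequality to the `c₁, c₂` form. -/
lemma combine {p Δ Δmax U2 Up V2 Vp W2 Wp A1 A2 : ℝ} (hp : 2 ≤ p)
    (hΔ0 : 0 ≤ Δ) (hD : 0 ≤ Δmax ^ (p/2 - 1))
    (hU2 : 0 ≤ U2)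
    (hV2 : V2 = Δ * W2) (hVp : Vp ≤ Δ * Δmax ^ (p/2 - 1) * Wp)
    (hW2 : W2 ≤ 2 * A1 ^ 2 + 2 * A2 ^ 2)
    (hWp : Wp ≤ 2 ^ (p-1) * (A1 ^ p + A2 ^ p))
    (hy1 : p * U2 * A1 ^ 2 ≤ (p-2)/4 * Up + 2 ^ (p-1) * A1 ^ p)
    (hy2 : p * U2 * A2 ^ 2 ≤ (p-2)/4 * Up + 2 ^ (p-1) * A2 ^ p) :
    CC p * (U2 * V2) + CC p * Vp
      ≤ Δ * (c₁ p * Up) + Δ * (2 ^ (p-1) * c₂ p Δmax * (A1 ^ p + A2 ^ p)) := by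
  set a : ℝ := 2 ^ (max (p - 3) 0) with hadef
  have ha : 0 < a := a_pos
  have hCC : CC p = a * (p * (p - 1) / 2) := rfl
  have hc₁ : c₁ p = a * ((p - 1) * (p - 2) / 2) := rfl
  have hc₂ : c₂ p Δmax = a * (p - 1) * (1 + p / 2 * Δmax ^ (p/2 - 1)) := rfl
  have hp1 : (0:ℝ) ≤ a * (p - 1) := by nlinarith
  -- first term
  have t1 : CC p * (U2 * V2) ≤ Δ * (a * (p-1)) * (((p-2)/4 * Up + 2 ^ (p-1) * A1 ^ p)
      + ((p-2)/4 * Up + 2 ^ (p-1) * A2 ^ p)) := by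
    rw [hV2]
    have s1 : U2 * W2 ≤ U2 * (2 * A1 ^ 2 + 2 * A2 ^ 2) := mul_le_mul_of_nonneg_left hW2 hU2
    have s2 : CC p * (U2 * (2 * A1 ^ 2 + 2 * A2 ^ 2))
        = (a * (p-1)) * ((p * U2 * A1 ^ 2) + (p * U2 * A2 ^ 2)) := by
      rw [hCC]; ring
    have s3 : (a * (p-1)) * ((p * U2 * A1 ^ 2) + (p * U2 * A2 ^ 2))
        ≤ (a * (p-1)) * (((p-2)/4 * Up + 2 ^ (p-1) * A1 ^ p)
            + ((p-2)/4 * Up + 2 ^ (p-1) * A2 ^ p)) :=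
      mul_le_mul_of_nonneg_left (add_le_add hy1 hy2) hp1
    calc CC p * (U2 * (Δ * W2)) = Δ * (CC p * (U2 * W2)) := by ring
      _ ≤ Δ * (CC p * (U2 * (2 * A1 ^ 2 + 2 * A2 ^ 2))) := by
          apply mul_le_mul_of_nonneg_left _ hΔ0
          exact mul_le_mul_of_nonneg_left s1 (CC_nonneg hp)
      _ = Δ * ((a * (p-1)) * ((p * U2 * A1 ^ 2) + (p * U2 * A2 ^ 2))) := by rw [s2]
      _ ≤ Δ * ((a * (p-1)) * (((p-2)/4 * Up + 2 ^ (p-1) * A1 ^ p)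
            + ((p-2)/4 * Up + 2 ^ (p-1) * A2 ^ p))) := mul_le_mul_of_nonneg_left s3 hΔ0
      _ = Δ * (a * (p-1)) * (((p-2)/4 * Up + 2 ^ (p-1) * A1 ^ p)
            + ((p-2)/4 * Up + 2 ^ (p-1) * A2 ^ p)) := by ring
  -- second term
  have t2 : CC p * Vp ≤ CC p * (Δ * Δmax ^ (p/2 - 1) * (2 ^ (p-1) * (A1 ^ p + A2 ^ p))) := by
    have s1 : Vp ≤ Δ * Δmax ^ (p/2 - 1) * (2 ^ (p-1) * (A1 ^ p + A2 ^ p)) := by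
      calc Vp ≤ Δ * Δmax ^ (p/2 - 1) * Wp := hVp
        _ ≤ Δ * Δmax ^ (p/2 - 1) * (2 ^ (p-1) * (A1 ^ p + A2 ^ p)) :=
          mul_le_mul_of_nonneg_left hWp (by positivity)
    exact mul_le_mul_of_nonneg_left s1 (CC_nonneg hp)
  have final : Δ * (a * (p-1)) * (((p-2)/4 * Up + 2 ^ (p-1) * A1 ^ p)
        + ((p-2)/4 * Up + 2 ^ (p-1) * A2 ^ p))
      + CC p * (Δ * Δmax ^ (p/2 - 1) * (2 ^ (p-1) * (A1 ^ p + A2 ^ p)))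
      = Δ * (c₁ p * Up) + Δ * (2 ^ (p-1) * c₂ p Δmax * (A1 ^ p + A2 ^ p)) := by
    rw [hCC, hc₁, hc₂]
    ring
  linarith [t1, t2]

/-- `(x+y)^q ≤ x^q + y^q` for `0 ≤ q ≤ 1`. -/
lemma rpow_add_le_add_rpow_real {x y q : ℝ} (hx : 0 ≤ x) (hy : 0 ≤ y)
    (hq0 : 0 ≤ q) (hq1 : q ≤ 1) : (x + y) ^ q ≤ x ^ q + y ^ q := by
  have h := NNReal.rpow_add_le_add_rpow x.toNNReal y.toNNReal hq0 hq1
  have hc : ∀ z : ℝ, 0 ≤ z → ((z.toNNReal : ℝ≥0) : ℝ) = z := fun z hz => Real.coe_toNNReal _ hz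
  calc (x + y) ^ q = ((x.toNNReal + y.toNNReal : ℝ≥0) : ℝ) ^ q := by
        push_cast [hc x hx, hc y hy]; ring_nf
    _ = (((x.toNNReal + y.toNNReal) ^ q : ℝ≥0) : ℝ) := by rw [NNReal.coe_rpow]
    _ ≤ ((x.toNNReal ^ q + y.toNNReal ^ q : ℝ≥0) : ℝ) := by exact_mod_cast h
    _ = x ^ q + y ^ q := by push_cast [NNReal.coe_rpow, hc x hx, hc y hy]; ring

/-- One-step `L^p` estimate for the Euler operator with two different (centered) noises:
`E|E_k(x,ε) − E_k(x',ε')|^p ≤ |x−x'|^p e^{C̄Δ} + Δ C̃ E|ε−ε'|^p`, and consequently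
`‖E_k(x,ε) − E_k(x',ε')‖_p ≤ e^{C̄Δ/p}|x−x'| + (ΔC̃)^{1/p}‖ε−ε'‖_p`, where
`C̄ = p[b]_Lip + c_p^{(1)} + 2^{p−1} c^{(2)}_{p,Δmax} [σ]_Lip^p E|ε|^p` and
`C̃ = 2^{p−1} c^{(2)}_{p,Δmax} ‖σ‖_∞^p`. -/
theorem euler_two_noise_estimate (d q : ℕ) (T Δmax : ℝ) (n : ℕ) (hn : 0 < n) (hT : 0 < T)
    (hΔmax : 0 < Δmax) (hΔ : T / n < Δmax) (p : ℝ) (hp : 2 ≤ p)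
    (b : ℝ → Euc d → Euc d) (σ : ℝ → Euc d → (Euc q →L[ℝ] Euc d)) (Lb Lσ Mσ : ℝ)
    (hLb : 0 ≤ Lb) (hLσ : 0 ≤ Lσ)
    (hb : ∀ t x y, ‖b t x - b t y‖ ≤ Lb * ‖x - y‖)
    (hσ : ∀ t x y, ‖σ t x - σ t y‖ ≤ Lσ * ‖x - y‖)
    (hMσ : ∀ t x, ‖σ t x‖ ≤ Mσ)
    (Ω : Type*) [MeasurableSpace Ω] (P : Measure Ω) [IsProbabilityMeasure P]
    (ε ε' : Ω → Euc q) (hεm : Measurable ε) (hε'm : Measurable ε')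
    (hε1 : Integrable ε P) (hε'1 : Integrable ε' P)
    (hε0 : (∫ ω, ε ω ∂P) = 0) (hε'0 : (∫ ω, ε' ω ∂P) = 0)
    (hεp : MemLp ε (ENNReal.ofReal p) P) (hε'p : MemLp ε' (ENNReal.ofReal p) P)
    (x x' : Euc d) (k : ℕ) :
    (∫ ω, ‖euler (T / n) b σ ((k : ℝ) * (T / n)) x (ε ω)
          - euler (T / n) b σ ((k : ℝ) * (T / n)) x' (ε' ω)‖ ^ p ∂P)
        ≤ ‖x - x'‖ ^ p
            * Real.exp ((p * Lb + c₁ p + 2 ^ (p - 1) * c₂ p Δmax * Lσ ^ p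
                * ∫ ω, ‖ε ω‖ ^ p ∂P) * (T / n))
          + (T / n) * (2 ^ (p - 1) * c₂ p Δmax * Mσ ^ p) * ∫ ω, ‖ε ω - ε' ω‖ ^ p ∂P
      ∧ (∫ ω, ‖euler (T / n) b σ ((k : ℝ) * (T / n)) x (ε ω)
          - euler (T / n) b σ ((k : ℝ) * (T / n)) x' (ε' ω)‖ ^ p ∂P) ^ (1 / p)
        ≤ Real.exp ((p * Lb + c₁ p + 2 ^ (p - 1) * c₂ p Δmax * Lσ ^ p
                * ∫ ω, ‖ε ω‖ ^ p ∂P) * (T / n) / p) * ‖x - x'‖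
          + ((T / n) * (2 ^ (p - 1) * c₂ p Δmax * Mσ ^ p)) ^ (1 / p)
            * (∫ ω, ‖ε ω - ε' ω‖ ^ p ∂P) ^ (1 / p) := by
  have hppos : (0:ℝ) < p := by linarith
  set Δ : ℝ := T / n with hΔdef
  have hΔ0 : 0 < Δ := div_pos hT (by exact_mod_cast hn)
  set tk : ℝ := (k : ℝ) * Δ with htkdef
  set δ : ℝ := ‖x - x'‖ with hδdef
  have hδ0 : 0 ≤ δ := norm_nonneg _
  set u : Euc d := (x - x') + Δ • (b tk x - b tk x') with hudef
  set V : Ω → Euc d := fun ω => Real.sqrt Δ • (σ tk x (ε ω) - σ tk x' (ε' ω)) with hVdef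
  have heuler : ∀ ω, euler Δ b σ tk x (ε ω) - euler Δ b σ tk x' (ε' ω) = u + V ω := by
    intro ω
    simp only [euler, hudef, hVdef, smul_sub]
    abel
  have hrw : (fun ω => ‖euler Δ b σ tk x (ε ω) - euler Δ b σ tk x' (ε' ω)‖ ^ p)
      = fun ω => ‖u + V ω‖ ^ p := funext fun ω => by rw [heuler ω]
  rw [hrw]
  -- nonnegativity and constants
  have hMσ0 : 0 ≤ Mσ := le_trans (norm_nonneg _) (hMσ 0 x)
  have hD : 0 ≤ Δmax ^ (p/2 - 1) := Real.rpow_nonneg hΔmax.le _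
  have hc₂0 : 0 ≤ c₂ p Δmax := c₂_nonneg hp hΔmax.le
  have hc₁0 : 0 ≤ c₁ p := c₁_nonneg hp
  have h2p : (0:ℝ) ≤ 2 ^ (p-1) := Real.rpow_nonneg (by norm_num) _
  have hLσp : (0:ℝ) ≤ Lσ ^ p := Real.rpow_nonneg hLσ _
  have hMσp : (0:ℝ) ≤ Mσ ^ p := Real.rpow_nonneg hMσ0 _
  set m : ℝ := ∫ ω, ‖ε ω‖ ^ p ∂P with hmdef
  set E' : ℝ := ∫ ω, ‖ε ω - ε' ω‖ ^ p ∂P with hE'def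
  have hm0 : 0 ≤ m := integral_nonneg fun ω => Real.rpow_nonneg (norm_nonneg _) _
  have hE'0 : 0 ≤ E' := integral_nonneg fun ω => Real.rpow_nonneg (norm_nonneg _) _
  -- integrability
  have hq0 : (ENNReal.ofReal p) ≠ 0 := ne_of_gt (ENNReal.ofReal_pos.2 hppos)
  have hqt : (ENNReal.ofReal p) ≠ ⊤ := ENNReal.ofReal_ne_top
  have hIεp : Integrable (fun ω => ‖ε ω‖ ^ p) P := by
    have := hεp.integrable_norm_rpow hq0 hqt
    rwa [ENNReal.toReal_ofReal hppos.le] at this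
  have hIdiff : Integrable (fun ω => ‖ε ω - ε' ω‖ ^ p) P := by
    have := (hεp.sub hε'p).integrable_norm_rpow hq0 hqt
    rw [ENNReal.toReal_ofReal hppos.le] at this
    exact this
  have hVint : Integrable V P := by
    have h1 : Integrable (fun ω => (σ tk x) (ε ω)) P := (σ tk x).integrable_comp hε1
    have h2 : Integrable (fun ω => (σ tk x') (ε' ω)) P := (σ tk x').integrable_comp hε'1
    exact ((h1.sub h2).smul (Real.sqrt Δ))
  have hV0 : (∫ ω, V ω ∂P) = 0 := by
    have h1 : Integrable (fun ω => (σ tk x) (ε ω)) P := (σ tk x).integrable_comp hε1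
    have h2 : Integrable (fun ω => (σ tk x') (ε' ω)) P := (σ tk x').integrable_comp hε'1
    calc (∫ ω, V ω ∂P) = Real.sqrt Δ • ∫ ω, ((σ tk x) (ε ω) - (σ tk x') (ε' ω)) ∂P := by
          rw [hVdef, integral_smul]
      _ = Real.sqrt Δ • ((∫ ω, (σ tk x) (ε ω) ∂P) - ∫ ω, (σ tk x') (ε' ω) ∂P) := by
          rw [integral_sub h1 h2]
      _ = 0 := by
          rw [ContinuousLinearMap.integral_comp_comm _ hε1,
            ContinuousLinearMap.integral_comp_comm _ hε'1, hε0, hε'0, map_zero, map_zero,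
            sub_zero, smul_zero]
  have hinner0 : (∫ ω, (⟪u, V ω⟫ : ℝ) ∂P) = 0 := by
    rw [integral_inner hVint u, hV0, inner_zero_right]
  have hinner_int : Integrable (fun ω => (⟪u, V ω⟫ : ℝ)) P := hVint.const_inner u
  -- the pointwise bound
  have key : ∀ ω, ‖u + V ω‖ ^ p
      ≤ (‖u‖ ^ p * (1 + c₁ p * Δ) + p * ‖u‖ ^ (p-2) * ⟪u, V ω⟫)
        + ((Δ * (2 ^ (p-1) * c₂ p Δmax * Lσ ^ p * δ ^ p)) * ‖ε ω‖ ^ p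
          + (Δ * (2 ^ (p-1) * c₂ p Δmax * Mσ ^ p)) * ‖ε ω - ε' ω‖ ^ p) := by
    intro ω
    set w : Euc d := σ tk x (ε ω) - σ tk x' (ε' ω) with hwdef
    set A1 : ℝ := Lσ * δ * ‖ε ω‖ with hA1def
    set A2 : ℝ := Mσ * ‖ε ω - ε' ω‖ with hA2def
    have hA1 : 0 ≤ A1 := by positivity
    have hA2 : 0 ≤ A2 := mul_nonneg hMσ0 (norm_nonneg _)
    have hWnorm : ‖w‖ ≤ A1 + A2 := by
      have hw : w = (σ tk x - σ tk x') (ε ω) + (σ tk x') (ε ω - ε' ω) := by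
        simp only [hwdef, ContinuousLinearMap.sub_apply, map_sub]
        abel
      calc ‖w‖ ≤ ‖(σ tk x - σ tk x') (ε ω)‖ + ‖(σ tk x') (ε ω - ε' ω)‖ := by
            rw [hw]; exact norm_add_le _ _
        _ ≤ ‖σ tk x - σ tk x'‖ * ‖ε ω‖ + ‖σ tk x'‖ * ‖ε ω - ε' ω‖ :=
            add_le_add (ContinuousLinearMap.le_opNorm _ _) (ContinuousLinearMap.le_opNorm _ _)
        _ ≤ A1 + A2 :=
            add_le_add (mul_le_mul_of_nonneg_right (hσ tk x x') (norm_nonneg _))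
              (mul_le_mul_of_nonneg_right (hMσ tk x') (norm_nonneg _))
    have hVω : V ω = Real.sqrt Δ • w := rfl
    have hnormV : ‖V ω‖ = Real.sqrt Δ * ‖w‖ := by
      rw [hVω, norm_smul, Real.norm_eq_abs, abs_of_nonneg (Real.sqrt_nonneg Δ)]
    have hV2 : ‖V ω‖ ^ 2 = Δ * ‖w‖ ^ 2 := by
      rw [hnormV, mul_pow, Real.sq_sqrt hΔ0.le]
    have hVp : ‖V ω‖ ^ p ≤ Δ * Δmax ^ (p/2 - 1) * ‖w‖ ^ p := by
      have e1 : ‖V ω‖ ^ p = Δ ^ (p/2) * ‖w‖ ^ p := by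
        rw [hnormV, Real.mul_rpow (Real.sqrt_nonneg _) (norm_nonneg _)]
        congr 1
        rw [Real.sqrt_eq_rpow, ← Real.rpow_mul hΔ0.le]
        congr 1
        ring
      have e2 : Δ ^ (p/2) ≤ Δ * Δmax ^ (p/2 - 1) := by
        nth_rewrite 1 [show p/2 = 1 + (p/2 - 1) by ring]
        rw [Real.rpow_add hΔ0, Real.rpow_one]
        exact mul_le_mul_of_nonneg_left
          (Real.rpow_le_rpow hΔ0.le hΔ.le (by linarith)) hΔ0.le
      rw [e1]
      exact mul_le_mul_of_nonneg_right e2 (Real.rpow_nonneg (norm_nonneg _) _)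
    have hW2 : ‖w‖ ^ 2 ≤ 2 * A1 ^ 2 + 2 * A2 ^ 2 := by
      nlinarith [norm_nonneg w, hWnorm, hA1, hA2, sq_nonneg (A1 - A2)]
    have hWp : ‖w‖ ^ p ≤ 2 ^ (p-1) * (A1 ^ p + A2 ^ p) := by
      calc ‖w‖ ^ p ≤ (A1 + A2) ^ p :=
            Real.rpow_le_rpow (norm_nonneg _) hWnorm (by linarith)
        _ ≤ 2 ^ (max (p-1) 0) * (A1 ^ p + A2 ^ p) :=
            rpow_add_le_two_rpow hA1 hA2 (by linarith)
        _ = 2 ^ (p-1) * (A1 ^ p + A2 ^ p) := by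
            rw [max_eq_left (by linarith)]
    have hy1 := young_aux (norm_nonneg u) hA1 hp
    have hy2 := young_aux (norm_nonneg u) hA2 hp
    have hcomb := combine (Δ := Δ) (Δmax := Δmax) (Up := ‖u‖ ^ p) hp hΔ0.le hD
      (Real.rpow_nonneg (norm_nonneg u) _) hV2 hVp hW2 hWp hy1 hy2
    have hL1 := L1 hp u (V ω)
    have hA1p : A1 ^ p = Lσ ^ p * δ ^ p * ‖ε ω‖ ^ p := by
      rw [hA1def, Real.mul_rpow (mul_nonneg hLσ hδ0) (norm_nonneg _),
        Real.mul_rpow hLσ hδ0]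
    have hA2p : A2 ^ p = Mσ ^ p * ‖ε ω - ε' ω‖ ^ p := Real.mul_rpow hMσ0 (norm_nonneg _)
    rw [hA1p, hA2p] at hcomb
    nlinarith [hcomb, hL1]
  -- integrate
  have i2a : Integrable (fun ω => ‖u‖ ^ p * (1 + c₁ p * Δ)
      + p * ‖u‖ ^ (p-2) * ⟪u, V ω⟫) P := by
    exact (integrable_const _).add (hinner_int.const_mul _)
  have i2b : Integrable (fun ω => (Δ * (2 ^ (p-1) * c₂ p Δmax * Lσ ^ p * δ ^ p)) * ‖ε ω‖ ^ p
      + (Δ * (2 ^ (p-1) * c₂ p Δmax * Mσ ^ p)) * ‖ε ω - ε' ω‖ ^ p) P := by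
    exact (hIεp.const_mul _).add (hIdiff.const_mul _)
  have hg_int : Integrable (fun ω =>
      (‖u‖ ^ p * (1 + c₁ p * Δ) + p * ‖u‖ ^ (p-2) * ⟪u, V ω⟫)
        + ((Δ * (2 ^ (p-1) * c₂ p Δmax * Lσ ^ p * δ ^ p)) * ‖ε ω‖ ^ p
          + (Δ * (2 ^ (p-1) * c₂ p Δmax * Mσ ^ p)) * ‖ε ω - ε' ω‖ ^ p)) P := by
    exact i2a.add i2b
  have step1 : (∫ ω, ‖u + V ω‖ ^ p ∂P)
      ≤ ‖u‖ ^ p * (1 + c₁ p * Δ)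
        + (Δ * (2 ^ (p-1) * c₂ p Δmax * Lσ ^ p * δ ^ p)) * m
        + (Δ * (2 ^ (p-1) * c₂ p Δmax * Mσ ^ p)) * E' := by
    have h1 := integral_mono_of_nonneg
      (ae_of_all _ fun ω => Real.rpow_nonneg (norm_nonneg _) p) hg_int (ae_of_all _ key)
    calc (∫ ω, ‖u + V ω‖ ^ p ∂P) ≤ _ := h1
      _ = ‖u‖ ^ p * (1 + c₁ p * Δ)
            + (Δ * (2 ^ (p-1) * c₂ p Δmax * Lσ ^ p * δ ^ p)) * m
            + (Δ * (2 ^ (p-1) * c₂ p Δmax * Mσ ^ p)) * E' := by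
          rw [integral_add i2a i2b,
            integral_add (integrable_const _) (hinner_int.const_mul _),
            integral_add (hIεp.const_mul _) (hIdiff.const_mul _),
            integral_const, integral_const_mul, integral_const_mul, integral_const_mul,
            hinner0]
          simp only [measure_univ, probReal_univ, ENNReal.toReal_one, smul_eq_mul, one_smul, mul_zero, add_zero]
          rw [← hmdef, ← hE'def]
          ring
  -- bound ‖u‖^p
  have hUnorm : ‖u‖ ≤ δ * (1 + Lb * Δ) := by
    calc ‖u‖ ≤ ‖x - x'‖ + ‖Δ • (b tk x - b tk x')‖ := norm_add_le _ _
      _ = δ + Δ * ‖b tk x - b tk x'‖ := by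
          rw [norm_smul, Real.norm_eq_abs, abs_of_nonneg hΔ0.le]
      _ ≤ δ + Δ * (Lb * δ) := by
          have := hb tk x x'
          have h2 := mul_le_mul_of_nonneg_left this hΔ0.le
          linarith
      _ = δ * (1 + Lb * Δ) := by ring
  have hUp_le : ‖u‖ ^ p ≤ δ ^ p * Real.exp (p * Lb * Δ) := by
    have h1 : (0:ℝ) ≤ 1 + Lb * Δ := by positivity
    calc ‖u‖ ^ p ≤ (δ * (1 + Lb * Δ)) ^ p :=
          Real.rpow_le_rpow (norm_nonneg _) hUnorm hppos.le
      _ = δ ^ p * (1 + Lb * Δ) ^ p := Real.mul_rpow hδ0 h1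
      _ ≤ δ ^ p * (Real.exp (Lb * Δ)) ^ p := by
          apply mul_le_mul_of_nonneg_left _ (Real.rpow_nonneg hδ0 _)
          apply Real.rpow_le_rpow h1 _ hppos.le
          linarith [Real.add_one_le_exp (Lb * Δ)]
      _ = δ ^ p * Real.exp (p * Lb * Δ) := by
          rw [← Real.exp_mul]
          congr 1
          ring
  -- conclude part 1
  have part1 : (∫ ω, ‖u + V ω‖ ^ p ∂P)
      ≤ δ ^ p * Real.exp ((p * Lb + c₁ p + 2 ^ (p - 1) * c₂ p Δmax * Lσ ^ p * m) * Δ)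
        + Δ * (2 ^ (p - 1) * c₂ p Δmax * Mσ ^ p) * E' := by
    set z : ℝ := c₁ p + 2 ^ (p-1) * c₂ p Δmax * Lσ ^ p * m with hzdef
    have hcoef : (0:ℝ) ≤ 2 ^ (p-1) * c₂ p Δmax * Lσ ^ p * m :=
      mul_nonneg (mul_nonneg (mul_nonneg h2p hc₂0) hLσp) hm0
    have hz0 : 0 ≤ z := by rw [hzdef]; linarith
    have hB : (0:ℝ) ≤ δ ^ p * Real.exp (p * Lb * Δ) :=
      mul_nonneg (Real.rpow_nonneg hδ0 _) (Real.exp_nonneg _)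
    have hone : (1:ℝ) ≤ Real.exp (p * Lb * Δ) :=
      Real.one_le_exp (mul_nonneg (mul_nonneg hppos.le hLb) hΔ0.le)
    have hfac : 0 ≤ 1 + c₁ p * Δ := by nlinarith [mul_nonneg hc₁0 hΔ0.le]
    have hmain : ‖u‖ ^ p * (1 + c₁ p * Δ)
        + (Δ * (2 ^ (p-1) * c₂ p Δmax * Lσ ^ p * δ ^ p)) * m
        ≤ δ ^ p * Real.exp ((p * Lb + z) * Δ) := by
      have s1 : ‖u‖ ^ p * (1 + c₁ p * Δ)
          ≤ (δ ^ p * Real.exp (p * Lb * Δ)) * (1 + c₁ p * Δ) :=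
        mul_le_mul_of_nonneg_right hUp_le hfac
      have base : δ ^ p ≤ δ ^ p * Real.exp (p * Lb * Δ) :=
        le_mul_of_one_le_right (Real.rpow_nonneg hδ0 _) hone
      have s2 : (Δ * (2 ^ (p-1) * c₂ p Δmax * Lσ ^ p * δ ^ p)) * m
          ≤ (δ ^ p * Real.exp (p * Lb * Δ)) * ((2 ^ (p-1) * c₂ p Δmax * Lσ ^ p * m) * Δ) := by
        calc (Δ * (2 ^ (p-1) * c₂ p Δmax * Lσ ^ p * δ ^ p)) * m
            = (2 ^ (p-1) * c₂ p Δmax * Lσ ^ p * m * Δ) * δ ^ p := by ring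
          _ ≤ (2 ^ (p-1) * c₂ p Δmax * Lσ ^ p * m * Δ) * (δ ^ p * Real.exp (p * Lb * Δ)) :=
              mul_le_mul_of_nonneg_left base (mul_nonneg hcoef hΔ0.le)
          _ = (δ ^ p * Real.exp (p * Lb * Δ)) * ((2 ^ (p-1) * c₂ p Δmax * Lσ ^ p * m) * Δ) := by
              ring
      have s3 : (δ ^ p * Real.exp (p * Lb * Δ)) * (1 + c₁ p * Δ)
          + (δ ^ p * Real.exp (p * Lb * Δ)) * ((2 ^ (p-1) * c₂ p Δmax * Lσ ^ p * m) * Δ)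
          = (δ ^ p * Real.exp (p * Lb * Δ)) * (1 + z * Δ) := by
        rw [hzdef]; ring
      have s4 : (δ ^ p * Real.exp (p * Lb * Δ)) * (1 + z * Δ)
          ≤ (δ ^ p * Real.exp (p * Lb * Δ)) * Real.exp (z * Δ) := by
        apply mul_le_mul_of_nonneg_left _ hB
        linarith [Real.add_one_le_exp (z * Δ)]
      have s5 : (δ ^ p * Real.exp (p * Lb * Δ)) * Real.exp (z * Δ)
          = δ ^ p * Real.exp ((p * Lb + z) * Δ) := by
        rw [mul_assoc, ← Real.exp_add]
        congr 2
        ring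
      linarith [s1, s2]
    have hfinal : (p * Lb + z) * Δ
        = (p * Lb + c₁ p + 2 ^ (p - 1) * c₂ p Δmax * Lσ ^ p * m) * Δ := by
      rw [hzdef]; ring
    rw [hfinal] at hmain
    calc (∫ ω, ‖u + V ω‖ ^ p ∂P) ≤ _ := step1
      _ ≤ δ ^ p * Real.exp ((p * Lb + c₁ p + 2 ^ (p - 1) * c₂ p Δmax * Lσ ^ p * m) * Δ)
          + Δ * (2 ^ (p - 1) * c₂ p Δmax * Mσ ^ p) * E' := by
        linarith [hmain]
  refine ⟨part1, ?_⟩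
  -- part 2
  have hI0 : 0 ≤ (∫ ω, ‖u + V ω‖ ^ p ∂P) :=
    integral_nonneg fun ω => Real.rpow_nonneg (norm_nonneg _) _
  have hR1 : (0:ℝ) ≤ δ ^ p * Real.exp ((p * Lb + c₁ p + 2 ^ (p - 1) * c₂ p Δmax * Lσ ^ p * m) * Δ) :=
    mul_nonneg (Real.rpow_nonneg hδ0 _) (Real.exp_nonneg _)
  have hcoef2 : (0:ℝ) ≤ Δ * (2 ^ (p - 1) * c₂ p Δmax * Mσ ^ p) :=
    mul_nonneg hΔ0.le (mul_nonneg (mul_nonneg h2p hc₂0) hMσp)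
  have hR2 : (0:ℝ) ≤ Δ * (2 ^ (p - 1) * c₂ p Δmax * Mσ ^ p) * E' := mul_nonneg hcoef2 hE'0
  have hinvp : (0:ℝ) ≤ 1/p := by positivity
  have h2 := Real.rpow_le_rpow hI0 part1 hinvp
  have h3 := rpow_add_le_add_rpow_real hR1 hR2 hinvp
    (by rw [div_le_one hppos]; linarith : 1/p ≤ 1)
  have e1 : (δ ^ p * Real.exp ((p * Lb + c₁ p + 2 ^ (p - 1) * c₂ p Δmax * Lσ ^ p * m) * Δ)) ^ (1/p)
      = Real.exp ((p * Lb + c₁ p + 2 ^ (p - 1) * c₂ p Δmax * Lσ ^ p * m) * Δ / p) * δ := by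
    rw [Real.mul_rpow (Real.rpow_nonneg hδ0 _) (Real.exp_nonneg _)]
    rw [← Real.rpow_mul hδ0, mul_one_div, div_self (ne_of_gt hppos), Real.rpow_one]
    rw [← Real.exp_mul]
    rw [mul_one_div]
    ring
  have e2 : (Δ * (2 ^ (p - 1) * c₂ p Δmax * Mσ ^ p) * E') ^ (1/p)
      = (Δ * (2 ^ (p - 1) * c₂ p Δmax * Mσ ^ p)) ^ (1/p) * E' ^ (1/p) :=
    Real.mul_rpow hcoef2 hE'0
  calc (∫ ω, ‖u + V ω‖ ^ p ∂P) ^ (1/p)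
      ≤ (δ ^ p * Real.exp ((p * Lb + c₁ p + 2 ^ (p - 1) * c₂ p Δmax * Lσ ^ p * m) * Δ)
          + Δ * (2 ^ (p - 1) * c₂ p Δmax * Mσ ^ p) * E') ^ (1/p) := h2
    _ ≤ (δ ^ p * Real.exp ((p * Lb + c₁ p + 2 ^ (p - 1) * c₂ p Δmax * Lσ ^ p * m) * Δ)) ^ (1/p)
          + (Δ * (2 ^ (p - 1) * c₂ p Δmax * Mσ ^ p) * E') ^ (1/p) := h3
    _ = Real.exp ((p * Lb + c₁ p + 2 ^ (p - 1) * c₂ p Δmax * Lσ ^ p * m) * Δ / p) * δ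
          + (Δ * (2 ^ (p - 1) * c₂ p Δmax * Mσ ^ p)) ^ (1/p) * E' ^ (1/p) := by
        rw [e1, e2]
end
end

section
/- For every real r ≥ 2 and all u, v ∈ ℝ^d (Euclidean norm |·| and inner product ⟨·,·⟩): |u+v|^r ≤ |u|^r + r|u|^{r−2}⟨u,v⟩ + 2^{(r−3)₊} · (r(r−1)/2) · ( |u|^{r−2}|v|² + |v|^r ), where the term r|u|^{r−2}⟨u,v⟩ is understood to be 0 when u = 0. -/
open Real Set


private lemma mono_aux {f f' : ℝ → ℝ} {x : ℝ} (hx : 0 ≤ x)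
    (hf : ∀ t ∈ Icc (0:ℝ) x, HasDerivAt f (f' t) t)
    (hf' : ∀ t ∈ Icc (0:ℝ) x, 0 ≤ f' t) : f 0 ≤ f x := by
  rcases eq_or_lt_of_le hx with rfl | hx'
  · exact le_rfl
  have hmono : MonotoneOn f (Icc 0 x) := by
    apply monotoneOn_of_deriv_nonneg (convex_Icc 0 x)
    · exact fun t ht => (hf t ht).continuousAt.continuousWithinAt
    · intro t ht
      rw [interior_Icc] at ht
      exact (hf t (Ioo_subset_Icc_self ht)).differentiableAt.differentiableWithinAt
    · intro t ht
      rw [interior_Icc] at ht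
      rw [(hf t (Ioo_subset_Icc_self ht)).deriv]
      exact hf' t (Ioo_subset_Icc_self ht)
  exact hmono (left_mem_Icc.2 hx) (right_mem_Icc.2 hx) hx

private lemma taylor_two {g g' g'' : ℝ → ℝ} {b M : ℝ} (hb : 0 ≤ b)
    (hg : ∀ t ∈ Icc (0:ℝ) b, HasDerivAt g (g' t) t)
    (hg' : ∀ t ∈ Icc (0:ℝ) b, HasDerivAt g' (g'' t) t)
    (hM : ∀ t ∈ Icc (0:ℝ) b, g'' t ≤ M) :
    g b ≤ g 0 + g' 0 * b + M / 2 * b ^ 2 := by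
  have h1 : ∀ s ∈ Icc (0:ℝ) b, g' s ≤ g' 0 + M * s := by
    intro s hs
    have hsub : Icc (0:ℝ) s ⊆ Icc 0 b := Icc_subset_Icc le_rfl hs.2
    have h := mono_aux (f := fun t => g' 0 + M * t - g' t) (f' := fun t => M - g'' t) hs.1
      (fun t ht => by
        have h0 : HasDerivAt (fun t : ℝ => g' 0 + M * t) M t := by
          simpa using ((hasDerivAt_id t).const_mul M).const_add (g' 0)
        exact h0.sub (hg' t (hsub ht)))
      (fun t ht => sub_nonneg.2 (hM t (hsub ht)))
    simp only [mul_zero, add_zero, sub_self] at h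
    linarith
  have h2 := mono_aux (f := fun t => g 0 + g' 0 * t + M / 2 * t ^ 2 - g t)
      (f' := fun t => g' 0 + M * t - g' t) hb
      (fun t ht => by
        have ha : HasDerivAt (fun t : ℝ => g 0 + g' 0 * t) (g' 0) t := by
          simpa using ((hasDerivAt_id t).const_mul (g' 0)).const_add (g 0)
        have hb2 : HasDerivAt (fun t : ℝ => M / 2 * t ^ 2) (M / 2 * (2 * t ^ 1)) t := by
          exact (hasDerivAt_pow 2 t).const_mul (M / 2)
        have h3 := (ha.add hb2).sub (hg t ht)
        exact h3.congr_deriv (by ring))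
      (fun t ht => sub_nonneg.2 (h1 t ht))
  simp only [mul_zero, add_zero, ne_eq, OfNat.ofNat_ne_zero, not_false_eq_true, zero_pow,
    sub_self] at h2
  linarith

private lemma hasDerivAt_affine_rpow (c e p t : ℝ) (hp : 1 ≤ p) :
    HasDerivAt (fun s => (c + e * s) ^ p) (p * (c + e * t) ^ (p - 1) * e) t := by
  have h1 : HasDerivAt (fun s : ℝ => c + e * s) e t := by
    simpa using ((hasDerivAt_id t).const_mul e).const_add c
  have h2 := (Real.hasDerivAt_rpow_const (x := c + e * t) (p := p) (Or.inr hp)).comp t h1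
  exact (h1.rpow_const (Or.inr hp)).congr_deriv (by ring)

private lemma core (r : ℝ) (hr : 2 ≤ r) {a b e K : ℝ} (hb : 0 ≤ b)
    (he : e = 1 ∨ e = -1)
    (hpos : ∀ t ∈ Icc (0:ℝ) b, 0 ≤ a + e * t)
    (hK : ∀ t ∈ Icc (0:ℝ) b, a + e * t ≤ K) :
    (a + e * b) ^ r ≤ a ^ r + r * a ^ (r - 1) * e * b
      + r * (r - 1) / 2 * K ^ (r - 2) * b ^ 2 := by
  have hr1 : (1:ℝ) ≤ r := by linarith
  have hr2 : (1:ℝ) ≤ r - 1 := by linarith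
  have h0b : (0:ℝ) ∈ Icc (0:ℝ) b := left_mem_Icc.2 hb
  have hgd : ∀ t ∈ Icc (0:ℝ) b,
      HasDerivAt (fun s => (a + e * s) ^ r) (r * e * (a + e * t) ^ (r - 1)) t := by
    intro t _
    have h := hasDerivAt_affine_rpow a e r t hr1
    convert h using 1
    ring
  have hg'd : ∀ t ∈ Icc (0:ℝ) b,
      HasDerivAt (fun s => r * e * (a + e * s) ^ (r - 1)) (r * (r - 1) * (a + e * t) ^ (r - 2)) t := by
    intro t _
    have h := (hasDerivAt_affine_rpow a e (r - 1) t hr2).const_mul (r * e)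
    refine h.congr_deriv ?_
    have h21 : r - 1 - 1 = r - 2 := by ring
    rw [h21]
    rcases he with rfl | rfl <;> ring
  have hM : ∀ t ∈ Icc (0:ℝ) b,
      r * (r - 1) * (a + e * t) ^ (r - 2) ≤ r * (r - 1) * K ^ (r - 2) := by
    intro t ht
    have h := Real.rpow_le_rpow (hpos t ht) (hK t ht) (by linarith : (0:ℝ) ≤ r - 2)
    exact mul_le_mul_of_nonneg_left h (by nlinarith)
  have h := taylor_two hb hgd hg'd hM
  simp only [mul_zero, add_zero] at h
  calc (a + e * b) ^ r ≤ a ^ r + r * e * a ^ (r - 1) * b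
        + r * (r - 1) * K ^ (r - 2) / 2 * b ^ 2 := h
    _ = a ^ r + r * a ^ (r - 1) * e * b + r * (r - 1) / 2 * K ^ (r - 2) * b ^ 2 := by ring

private lemma split_rpow {x y q : ℝ} (hx : 0 ≤ x) (hy : 0 ≤ y) (hq : 0 ≤ q) :
    (x + y) ^ q ≤ 2 ^ max (q - 1) 0 * (x ^ q + y ^ q) := by
  lift x to NNReal using hx
  lift y to NNReal using hy
  rcases le_total q 1 with h1 | h1
  · rw [max_eq_right (by linarith), Real.rpow_zero, one_mul]
    exact_mod_cast NNReal.rpow_add_le_add_rpow x y hq h1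
  · rw [max_eq_left (by linarith)]
    exact_mod_cast NNReal.rpow_add_le_mul_rpow_add_rpow x y h1
private lemma splus (r : ℝ) (hr : 2 ≤ r) {a b : ℝ} (ha : 0 ≤ a) (hb : 0 ≤ b) :
    (a + b) ^ r ≤ a ^ r + r * a ^ (r - 1) * b
      + 2 ^ max (r - 3) 0 * (r * (r - 1) / 2) * (a ^ (r - 2) * b ^ (2:ℝ) + b ^ r) := by
  have hr0 : (0:ℝ) < r := by linarith
  rcases eq_or_lt_of_le hb with rfl | hb'
  · simp [Real.zero_rpow hr0.ne', Real.zero_rpow (by norm_num : (2:ℝ) ≠ 0)]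
  have hcore := core r hr (a := a) (b := b) (e := 1) (K := a + b) hb (Or.inl rfl)
    (fun t ht => by rw [one_mul]; linarith [ht.1])
    (fun t ht => by rw [one_mul]; linarith [ht.2])
  rw [one_mul] at hcore
  simp only [mul_one] at hcore
  have hsplit := split_rpow ha hb (by linarith : (0:ℝ) ≤ r - 2)
  rw [show r - 2 - 1 = r - 3 by ring] at hsplit
  have hb2 : b ^ (r - 2) * b ^ (2:ℝ) = b ^ r := by
    rw [← Real.rpow_add hb']; norm_num
  have hD0 : (0:ℝ) ≤ r * (r - 1) / 2 := by nlinarith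
  have key : r * (r - 1) / 2 * (a + b) ^ (r - 2) * b ^ 2
      ≤ 2 ^ max (r - 3) 0 * (r * (r - 1) / 2) * (a ^ (r - 2) * b ^ (2:ℝ) + b ^ r) := by
    calc r * (r - 1) / 2 * (a + b) ^ (r - 2) * b ^ 2
        ≤ r * (r - 1) / 2 * (2 ^ max (r - 3) 0 * (a ^ (r - 2) + b ^ (r - 2))) * b ^ 2 :=
          mul_le_mul_of_nonneg_right (mul_le_mul_of_nonneg_left hsplit hD0) (sq_nonneg b)
      _ = 2 ^ max (r - 3) 0 * (r * (r - 1) / 2)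
            * (a ^ (r - 2) * b ^ (2:ℝ) + b ^ (r - 2) * b ^ (2:ℝ)) := by
          rw [Real.rpow_two]; ring
      _ = 2 ^ max (r - 3) 0 * (r * (r - 1) / 2) * (a ^ (r - 2) * b ^ (2:ℝ) + b ^ r) := by
          rw [hb2]
  linarith

private lemma sminus (r : ℝ) (hr : 2 ≤ r) {a b : ℝ} (ha : 0 ≤ a) (hb : 0 ≤ b) :
    |a - b| ^ r ≤ a ^ r - r * a ^ (r - 1) * b
      + 2 ^ max (r - 3) 0 * (r * (r - 1) / 2) * (a ^ (r - 2) * b ^ (2:ℝ) + b ^ r) := by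
  have hr0 : (0:ℝ) < r := by linarith
  have hD0 : (0:ℝ) ≤ r * (r - 1) / 2 := by nlinarith
  have hD1 : (1:ℝ) ≤ r * (r - 1) / 2 := by nlinarith
  have hpow1 : (1:ℝ) ≤ 2 ^ max (r - 3) 0 := by
    rw [← Real.rpow_zero 2]
    exact Real.rpow_le_rpow_of_exponent_le one_le_two (le_max_right _ _)
  have hDC : r * (r - 1) / 2 ≤ 2 ^ max (r - 3) 0 * (r * (r - 1) / 2) :=
    le_mul_of_one_le_left hD0 hpow1
  have hC1 : (1:ℝ) ≤ 2 ^ max (r - 3) 0 * (r * (r - 1) / 2) := le_trans hD1 hDC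
  have hC0 : (0:ℝ) ≤ 2 ^ max (r - 3) 0 * (r * (r - 1) / 2) := by linarith
  rcases eq_or_lt_of_le hb with rfl | hb'
  · simp [abs_of_nonneg ha, Real.zero_rpow hr0.ne', Real.zero_rpow (by norm_num : (2:ℝ) ≠ 0)]
  rcases eq_or_lt_of_le ha with rfl | ha'
  · rw [zero_sub, abs_neg, abs_of_nonneg hb, Real.zero_rpow hr0.ne',
      Real.zero_rpow (by linarith : r - 1 ≠ 0)]
    have h1 : 0 ≤ (0:ℝ) ^ (r - 2) * b ^ (2:ℝ) :=
      mul_nonneg (Real.rpow_nonneg le_rfl _) (Real.rpow_nonneg hb _)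
    have h2 : (0:ℝ) ≤ b ^ r := Real.rpow_nonneg hb r
    nlinarith
  rcases le_or_gt b a with hab | hab
  · -- 0 < b ≤ a
    have hcore := core r hr (a := a) (b := b) (e := -1) (K := a) hb (Or.inr rfl)
      (fun t ht => by nlinarith [ht.2])
      (fun t ht => by nlinarith [ht.1])
    rw [abs_of_nonneg (by linarith : 0 ≤ a - b), show a - b = a + (-1) * b by ring]
    have hx : 0 ≤ a ^ (r - 2) * b ^ (2:ℝ) :=
      mul_nonneg (Real.rpow_nonneg ha _) (Real.rpow_nonneg hb _)
    have hy : (0:ℝ) ≤ b ^ r := Real.rpow_nonneg hb r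
    have hb2 : b ^ (2:ℝ) = b ^ 2 := Real.rpow_two b
    rw [show (b:ℝ) ^ 2 = b ^ (2:ℝ) from hb2.symm] at hcore
    have h1 : 0 ≤ 2 ^ max (r - 3) 0 * (r * (r - 1) / 2) * b ^ r := mul_nonneg hC0 hy
    have h2 := mul_le_mul_of_nonneg_right hDC hx
    linarith
  · -- 0 < a < b
    have hcore := core r hr (a := b) (b := a) (e := -1) (K := b) ha (Or.inr rfl)
      (fun t ht => by nlinarith [ht.2])
      (fun t ht => by nlinarith [ht.1])
    rw [abs_of_nonpos (by linarith : a - b ≤ 0), neg_sub,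
      show b - a = b + (-1) * a by ring]
    have ha1 : a ^ (r - 1) = a ^ (r - 2) * a := by
      rw [show r - 1 = (r - 2) + 1 by ring, Real.rpow_add ha', Real.rpow_one]
    have hb1 : b ^ (r - 1) = b ^ (r - 2) * b := by
      rw [show r - 1 = (r - 2) + 1 by ring, Real.rpow_add hb', Real.rpow_one]
    have hmono : a ^ (r - 2) ≤ b ^ (r - 2) :=
      Real.rpow_le_rpow ha'.le hab.le (by linarith)
    have hq1 : r * a ^ (r - 1) * b ≤ r * b ^ (r - 1) * a := by
      calc r * a ^ (r - 1) * b = r * (a * b) * a ^ (r - 2) := by rw [ha1]; ring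
        _ ≤ r * (a * b) * b ^ (r - 2) := mul_le_mul_of_nonneg_left hmono
            (mul_nonneg (by linarith) (mul_nonneg ha'.le hb'.le))
        _ = r * b ^ (r - 1) * a := by rw [hb1]; ring
    have hxa : 0 ≤ a ^ (r - 2) * b ^ (2:ℝ) :=
      mul_nonneg (Real.rpow_nonneg ha'.le _) (Real.rpow_nonneg hb'.le _)
    have hya : (0:ℝ) ≤ a ^ r := Real.rpow_nonneg ha'.le r
    have hyb : (0:ℝ) ≤ b ^ r := Real.rpow_nonneg hb'.le r
    have ha2 : a ^ (2:ℝ) = a ^ 2 := Real.rpow_two a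
    rw [show (a:ℝ) ^ 2 = a ^ (2:ℝ) from ha2.symm] at hcore
    have hq2 : r * (r - 1) / 2 * (b ^ (r - 2) * a ^ (2:ℝ))
        ≤ a ^ r + 2 ^ max (r - 3) 0 * (r * (r - 1) / 2) * (a ^ (r - 2) * b ^ (2:ℝ))
          + (2 ^ max (r - 3) 0 * (r * (r - 1) / 2) - 1) * b ^ r := by
      rcases le_total r 4 with hr4 | hr4
      · have h4 : b ^ (r - 4) ≤ a ^ (r - 4) :=
          Real.rpow_le_rpow_of_nonpos ha' hab.le (by linarith)
        have e1 : b ^ (r - 2) * a ^ (2:ℝ) = b ^ (r - 4) * (a ^ (2:ℝ) * b ^ (2:ℝ)) := by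
          rw [show r - 2 = (r - 4) + 2 by ring, Real.rpow_add hb']; ring
        have e2 : a ^ (r - 2) * b ^ (2:ℝ) = a ^ (r - 4) * (a ^ (2:ℝ) * b ^ (2:ℝ)) := by
          rw [show r - 2 = (r - 4) + 2 by ring, Real.rpow_add ha']; ring
        have hswap : b ^ (r - 2) * a ^ (2:ℝ) ≤ a ^ (r - 2) * b ^ (2:ℝ) := by
          rw [e1, e2]
          exact mul_le_mul_of_nonneg_right h4
            (mul_nonneg (Real.rpow_nonneg ha'.le _) (Real.rpow_nonneg hb'.le _))
        have h7 := mul_le_mul_of_nonneg_left hswap hD0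
        have h8 := mul_le_mul_of_nonneg_right hDC hxa
        have h9 : 0 ≤ (2 ^ max (r - 3) 0 * (r * (r - 1) / 2) - 1) * b ^ r :=
          mul_nonneg (by linarith) hyb
        linarith
      · have ha2b : a ^ (2:ℝ) ≤ b ^ (2:ℝ) :=
          Real.rpow_le_rpow ha'.le hab.le (by norm_num)
        have hbr : b ^ (r - 2) * b ^ (2:ℝ) = b ^ r := by
          rw [← Real.rpow_add hb']; norm_num
        have h5 : b ^ (r - 2) * a ^ (2:ℝ) ≤ b ^ r := by
          rw [← hbr]
          exact mul_le_mul_of_nonneg_left ha2b (Real.rpow_nonneg hb'.le _)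
        have hm1 : (2:ℝ) ≤ 2 ^ max (r - 3) 0 := by
          nth_rewrite 1 [← Real.rpow_one 2]
          exact Real.rpow_le_rpow_of_exponent_le one_le_two
            (le_trans (show (1:ℝ) ≤ r - 3 by linarith) (le_max_left (r - 3) 0))
        have hC2 : r * (r - 1) / 2 + 1 ≤ 2 ^ max (r - 3) 0 * (r * (r - 1) / 2) := by
          nlinarith
        have h6 : r * (r - 1) / 2 * (b ^ (r - 2) * a ^ (2:ℝ)) ≤ r * (r - 1) / 2 * b ^ r :=
          mul_le_mul_of_nonneg_left h5 hD0
        have h7 : r * (r - 1) / 2 * b ^ r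
            ≤ (2 ^ max (r - 3) 0 * (r * (r - 1) / 2) - 1) * b ^ r :=
          mul_le_mul_of_nonneg_right (by linarith) hyb
        have h8 : 0 ≤ 2 ^ max (r - 3) 0 * (r * (r - 1) / 2) * (a ^ (r - 2) * b ^ (2:ℝ)) :=
          mul_nonneg hC0 hxa
        linarith
    linarith

/-- For every real `r ≥ 2` and all `u, v ∈ ℝ^d` (Euclidean norm and inner product):
`|u+v|^r ≤ |u|^r + r|u|^{r−2}⟨u,v⟩ + 2^{(r−3)₊}·(r(r−1)/2)·(|u|^{r−2}|v|² + |v|^r)`,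
the middle term being `0` when `u = 0`. -/
theorem norm_add_rpow_taylor_inequality (d : ℕ) (r : ℝ) (hr : 2 ≤ r)
    (u v : EuclideanSpace ℝ (Fin d)) :
    ‖u + v‖ ^ r ≤ ‖u‖ ^ r + r * ‖u‖ ^ (r - 2) * (inner ℝ u v : ℝ)
      + 2 ^ (max (r - 3) 0) * (r * (r - 1) / 2)
        * (‖u‖ ^ (r - 2) * ‖v‖ ^ (2 : ℝ) + ‖v‖ ^ r) := by
  have hr0 : (0:ℝ) < r := by linarith
  have hD0 : (0:ℝ) ≤ r * (r - 1) / 2 := by nlinarith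
  have hpow1 : (1:ℝ) ≤ 2 ^ max (r - 3) 0 := by
    rw [← Real.rpow_zero 2]
    exact Real.rpow_le_rpow_of_exponent_le one_le_two (le_max_right _ _)
  have hC1 : (1:ℝ) ≤ 2 ^ max (r - 3) 0 * (r * (r - 1) / 2) := by nlinarith
  rcases eq_or_ne u 0 with rfl | hu
  · simp only [inner_zero_left, norm_zero, zero_add, mul_zero]
    rw [Real.zero_rpow hr0.ne']
    have h1 : 0 ≤ (0:ℝ) ^ (r - 2) * ‖v‖ ^ (2:ℝ) :=
      mul_nonneg (Real.rpow_nonneg le_rfl _) (Real.rpow_nonneg (norm_nonneg v) _)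
    have h2 : (0:ℝ) ≤ ‖v‖ ^ r := Real.rpow_nonneg (norm_nonneg v) r
    nlinarith
  rcases eq_or_ne v 0 with rfl | hv
  · simp only [inner_zero_right, norm_zero, add_zero, mul_zero]
    rw [Real.zero_rpow hr0.ne', Real.zero_rpow (by norm_num : (2:ℝ) ≠ 0)]
    simp
  have hA : (0:ℝ) < ‖u‖ := norm_pos_iff.mpr hu
  have hB : (0:ℝ) < ‖v‖ := norm_pos_iff.mpr hv
  set A := ‖u‖ with hAdef
  set B := ‖v‖ with hBdef
  set S : ℝ := inner ℝ u v with hSdef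
  have habs : |S| ≤ A * B := abs_real_inner_le_norm u v
  have hAB : 0 < A * B := mul_pos hA hB
  set θ : ℝ := (S + A * B) / (2 * (A * B)) with hθdef
  have hθ0 : 0 ≤ θ := div_nonneg (by linarith [neg_abs_le S]) (by linarith)
  have hθ1 : θ ≤ 1 := by
    rw [hθdef, div_le_one (by linarith)]
    linarith [le_abs_self S]
  have hpow : ∀ x : ℝ, 0 ≤ x → (x ^ 2) ^ (r / 2) = x ^ r := by
    intro x hx
    rw [← Real.rpow_two, ← Real.rpow_mul hx]
    congr 1
    ring
  have hx : ((A + B) ^ 2 : ℝ) ∈ Set.Ici (0:ℝ) := Set.mem_Ici.2 (sq_nonneg _)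
  have hy : ((A - B) ^ 2 : ℝ) ∈ Set.Ici (0:ℝ) := Set.mem_Ici.2 (sq_nonneg _)
  have hconv := (convexOn_rpow (show (1:ℝ) ≤ r / 2 by linarith)).2 hx hy hθ0
    (show (0:ℝ) ≤ 1 - θ by linarith) (show θ + (1 - θ) = 1 by ring)
  simp only [smul_eq_mul] at hconv
  have hcomb : θ * (A + B) ^ 2 + (1 - θ) * (A - B) ^ 2 = ‖u + v‖ ^ 2 := by
    rw [norm_add_sq_real, ← hAdef, ← hBdef, ← hSdef, hθdef]
    field_simp
    ring
  rw [hcomb, hpow _ (norm_nonneg (u + v)), hpow _ (by linarith : (0:ℝ) ≤ A + B)] at hconv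
  rw [show ((A - B) ^ 2 : ℝ) = |A - B| ^ 2 from (sq_abs _).symm,
    hpow _ (abs_nonneg (A - B))] at hconv
  have hplus := splus r hr hA.le hB.le
  have hminus := sminus r hr hA.le hB.le
  have h1 := mul_le_mul_of_nonneg_left hplus hθ0
  have h2 := mul_le_mul_of_nonneg_left hminus (by linarith : (0:ℝ) ≤ 1 - θ)
  have hA1 : A ^ (r - 1) = A ^ (r - 2) * A := by
    rw [show r - 1 = (r - 2) + 1 by ring, Real.rpow_add hA, Real.rpow_one]
  have hid : θ * (A ^ r + r * A ^ (r - 1) * B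
        + 2 ^ max (r - 3) 0 * (r * (r - 1) / 2) * (A ^ (r - 2) * B ^ (2:ℝ) + B ^ r))
      + (1 - θ) * (A ^ r - r * A ^ (r - 1) * B
        + 2 ^ max (r - 3) 0 * (r * (r - 1) / 2) * (A ^ (r - 2) * B ^ (2:ℝ) + B ^ r))
      = A ^ r + r * A ^ (r - 2) * S
        + 2 ^ max (r - 3) 0 * (r * (r - 1) / 2) * (A ^ (r - 2) * B ^ (2:ℝ) + B ^ r) := by
    rw [hA1, hθdef]
    field_simp
    ring
  linarith
end

section
/- For every real r ≥ 2, all α, β ≥ 0 and every ε > 0: (α+β)^r ≤ α^r ( 1 + (r−1)·2^{r−2}·ε^r ) + 2^{r−2}·β^r·( r + ε^{−r(r−1)} ). -/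
open Real

lemma aux_two_pow {a b p : ℝ} (ha : 0 ≤ a) (hb : 0 ≤ b) (hp : 1 ≤ p) :
    (a + b) ^ p ≤ 2 ^ (p - 1) * (a ^ p + b ^ p) := by
  have h := NNReal.rpow_add_le_mul_rpow_add_rpow a.toNNReal b.toNNReal hp
  have := (NNReal.coe_le_coe).2 h
  push_cast at this
  rwa [Real.coe_toNNReal _ ha, Real.coe_toNNReal _ hb] at this

lemma aux_bernoulli {a b r : ℝ} (ha : 0 ≤ a) (hb : 0 ≤ b) (hab : 0 < a + b) (hr : 1 ≤ r) :
    (a + b) ^ r ≤ a ^ r + r * b * (a + b) ^ (r - 1) := by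
  have hs : (-1 : ℝ) ≤ a / (a + b) - 1 := by
    have : 0 ≤ a / (a + b) := div_nonneg ha hab.le
    linarith
  have h := one_add_mul_self_le_rpow_one_add hs hr
  have e1 : 1 + (a / (a + b) - 1) = a / (a + b) := by ring
  rw [e1] at h
  have hmul := mul_le_mul_of_nonneg_right h (Real.rpow_nonneg hab.le r)
  have hdiv : (a / (a + b)) ^ r * (a + b) ^ r = a ^ r := by
    rw [← Real.mul_rpow (div_nonneg ha hab.le) hab.le, div_mul_cancel₀ _ hab.ne']
  rw [hdiv] at hmul
  have hsplit : (a + b) ^ r = (a + b) ^ (r - 1) * (a + b) := by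
    rw [← Real.rpow_add_one hab.ne' (r - 1), sub_add_cancel]
  have e2 : (1 + r * (a / (a + b) - 1)) * (a + b) ^ r
      = (a + b) ^ r - r * b * (a + b) ^ (r - 1) := by
    rw [hsplit]; field_simp; ring
  rw [e2] at hmul
  linarith

/-- For every real `r ≥ 2`, all `α, β ≥ 0` and every `ε > 0`:
`(α+β)^r ≤ α^r (1 + (r−1)·2^{r−2}·ε^r) + 2^{r−2}·β^r·(r + ε^{−r(r−1)})`. -/
theorem young_type_power_inequality (r α β ε : ℝ) (hr : 2 ≤ r) (hα : 0 ≤ α) (hβ : 0 ≤ β)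
    (hε : 0 < ε) :
    (α + β) ^ r ≤ α ^ r * (1 + (r - 1) * 2 ^ (r - 2) * ε ^ r)
      + 2 ^ (r - 2) * β ^ r * (r + ε ^ (-(r * (r - 1)))) := by
  have hr1 : (1:ℝ) ≤ r - 1 := by linarith
  have hr0 : (0:ℝ) < r := by linarith
  have hrm1 : (0:ℝ) < r - 1 := by linarith
  rcases eq_or_lt_of_le (add_nonneg hα hβ) with h0 | hab
  · obtain ⟨hα0, hβ0⟩ := (add_eq_zero_iff_of_nonneg hα hβ).1 h0.symm
    subst hα0; subst hβ0
    simp [Real.zero_rpow hr0.ne']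
  have h1 : (α + β) ^ r ≤ α ^ r + r * β * (α + β) ^ (r - 1) :=
    aux_bernoulli hα hβ hab (by linarith)
  have h2 : (α + β) ^ (r - 1) ≤ 2 ^ (r - 2) * (α ^ (r - 1) + β ^ (r - 1)) := by
    have h := aux_two_pow hα hβ hr1
    have e : r - 1 - 1 = r - 2 := by ring
    rwa [e] at h
  have hconj : Real.HolderConjugate (r / (r - 1)) r := by
    rw [Real.holderConjugate_iff]; constructor
    · rw [lt_div_iff₀ hrm1]; linarith
    · field_simp; ring
  have hy := Real.young_inequality_of_nonneg
    (mul_nonneg (Real.rpow_nonneg hε.le (r-1)) (Real.rpow_nonneg hα (r-1)))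
    (mul_nonneg (Real.rpow_nonneg hε.le (-(r-1))) hβ) hconj
  have hA : (ε ^ (r-1) * α ^ (r-1)) ^ (r / (r-1)) = ε ^ r * α ^ r := by
    rw [Real.mul_rpow (Real.rpow_nonneg hε.le _) (Real.rpow_nonneg hα _),
      ← Real.rpow_mul hε.le, ← Real.rpow_mul hα]
    have e : (r - 1) * (r / (r-1)) = r := by field_simp
    rw [e]
  have hB : (ε ^ (-(r-1)) * β) ^ r = ε ^ (-(r*(r-1))) * β ^ r := by
    rw [Real.mul_rpow (Real.rpow_nonneg hε.le _) hβ, ← Real.rpow_mul hε.le]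
    have e : -(r - 1) * r = -(r * (r-1)) := by ring
    rw [e]
  have hC : ε ^ (r-1) * α ^ (r-1) * (ε ^ (-(r-1)) * β) = α ^ (r-1) * β := by
    have : ε ^ (r-1) * ε ^ (-(r-1)) = 1 := by
      rw [← Real.rpow_add hε]; simp
    calc ε ^ (r-1) * α ^ (r-1) * (ε ^ (-(r-1)) * β)
        = (ε ^ (r-1) * ε ^ (-(r-1))) * (α ^ (r-1) * β) := by ring
      _ = α ^ (r-1) * β := by rw [this]; ring
  rw [hA, hB, hC] at hy
  -- hy : α^(r-1)*β ≤ ε^r*α^r/(r/(r-1)) + ε^(-(r*(r-1)))*β^r/r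
  have hy' : α ^ (r-1) * β ≤ (r-1)/r * (ε ^ r * α ^ r) + ε ^ (-(r*(r-1))) * β ^ r / r := by
    have e : ε ^ r * α ^ r / (r / (r-1)) = (r-1)/r * (ε ^ r * α ^ r) := by
      field_simp
    rw [e] at hy; exact hy
  have h2pow : (0:ℝ) ≤ 2 ^ (r-2) := Real.rpow_nonneg (by norm_num) _
  have hβr : β ^ (r-1) * β = β ^ r := by
    rcases eq_or_lt_of_le hβ with h | h
    · rw [← h, Real.zero_rpow hr0.ne', mul_zero]
    · rw [← Real.rpow_add_one h.ne' (r-1), sub_add_cancel]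
  have hkey : r * 2 ^ (r-2) * (α ^ (r-1) * β)
      ≤ (r-1) * 2 ^ (r-2) * (ε ^ r * α ^ r) + 2 ^ (r-2) * (ε ^ (-(r*(r-1))) * β ^ r) := by
    have hm := mul_le_mul_of_nonneg_left hy' (mul_nonneg hr0.le h2pow)
    have e : r * 2 ^ (r-2) * ((r-1)/r * (ε ^ r * α ^ r) + ε ^ (-(r*(r-1))) * β ^ r / r)
        = (r-1) * 2 ^ (r-2) * (ε ^ r * α ^ r) + 2 ^ (r-2) * (ε ^ (-(r*(r-1))) * β ^ r) := by
      field_simp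
    rw [e] at hm; exact hm
  have h3 : r * β * (α + β) ^ (r-1) ≤ r * β * (2 ^ (r-2) * (α ^ (r-1) + β ^ (r-1))) :=
    mul_le_mul_of_nonneg_left h2 (mul_nonneg hr0.le hβ)
  have h4 : r * β * (2 ^ (r-2) * (α ^ (r-1) + β ^ (r-1)))
      = r * 2 ^ (r-2) * (α ^ (r-1) * β) + r * 2 ^ (r-2) * (β ^ (r-1) * β) := by ring
  rw [h4, hβr] at h3
  nlinarith [h1, h3, hkey]
end
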